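/- arXiv:1001.4895 — 7 statements merged into one kernel-verified Lean document; each statement's English description precedes it below -/
import Mathlib

section
/- Let G be a topological abelian group such that every countable subgroup of G is h-embedded in G. Then every countable subgroup of G is closed in G. -/
open Topology Filter Set

noncomputable section

/-- A topological space is *pseudocompact* if every continuous real-valued function
defined on it is bounded. -/
def IsPseudocompact (X : Type*) [TopologicalSpace X] : Prop :=
  ∀ f : X → ℝ, Continuous f → Bornology.IsBounded (Set.range f)

/-- A subgroup `D` of a topological abelian group `G` is *h-embedded* in `G` if every
(not necessarily continuous) homomorphism from `D` to the circle group extends to a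
continuous homomorphism from `G` to the circle group. -/
def IsHEmbedded {G : Type*} [CommGroup G] [TopologicalSpace G] (D : Subgroup G) : Prop :=
  ∀ f : D →* Circle, ∃ g : G →* Circle, Continuous g ∧ ∀ x : D, g x = f x

/-- The canonical evaluation homomorphism `α_G : G → G^∧∧`, `α_G(x)(χ) = χ(x)`,
where the dual groups carry the compact-open topology.  `G` is *reflexive* when this
map is a topological isomorphism, i.e. `IsHomeomorph ⇑(pontrEval G)`. -/
def pontrEval (G : Type*) [CommGroup G] [TopologicalSpace G] :
    G →* PontryaginDual (PontryaginDual G) where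
  toFun x :=
    { toFun := fun χ => χ x
      map_one' := rfl
      map_mul' := fun χ ψ => rfl
      continuous_toFun := by
        have h : Continuous fun χ : PontryaginDual G => χ.toContinuousMap x :=
          (continuous_eval_const x).comp
            (ContinuousMonoidHom.isInducing_toContinuousMap G Circle).continuous
        exact h }
  map_one' := ContinuousMonoidHom.ext fun χ => map_one χ
  map_mul' x y := ContinuousMonoidHom.ext fun χ => map_mul χ x y

/-- The induced map `ℚ/ℤ →+ ℝ/ℤ`. -/
noncomputable def ratAddCircleToReal : AddCircle (1 : ℚ) →+ AddCircle (1 : ℝ) :=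
  QuotientAddGroup.map _ _ (Rat.castHom ℝ).toAddMonoidHom (by
    intro q hq
    obtain ⟨n, hn⟩ := AddSubgroup.mem_zmultiples_iff.mp hq
    refine AddSubgroup.mem_comap.mpr (AddSubgroup.mem_zmultiples_iff.mpr ⟨n, ?_⟩)
    simp only [RingHom.toAddMonoidHom_eq_coe, AddMonoidHom.coe_coe, Rat.coe_castHom]
    rw [← hn]; push_cast; simp)

lemma ratAddCircleToReal_eq_zero {z : AddCircle (1 : ℚ)} (h : ratAddCircleToReal z = 0) :
    z = 0 := by
  induction z using QuotientAddGroup.induction_on with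
  | H q =>
    have : ratAddCircleToReal ((q : AddCircle (1 : ℚ))) = ((q : ℝ) : AddCircle (1 : ℝ)) := rfl
    rw [this] at h
    obtain ⟨n, hn⟩ := AddSubgroup.mem_zmultiples_iff.mp ((QuotientAddGroup.eq_zero_iff _).mp h)
    have hq : q = (n : ℚ) := by
      have : ((n : ℚ) : ℝ) = (q : ℝ) := by rw [← hn]; push_cast; simp
      exact_mod_cast this.symm
    refine (QuotientAddGroup.eq_zero_iff _).mpr (AddSubgroup.mem_zmultiples_iff.mpr ⟨n, ?_⟩)
    rw [hq]; simp

lemma exists_circle_char {A : Type*} [CommGroup A] {a : A} (ha : a ≠ 1) :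
    ∃ χ : A →* Circle, χ a ≠ 1 := by
  have ha' : Additive.ofMul a ≠ (0 : Additive A) := ha
  obtain ⟨c, hc⟩ := CharacterModule.exists_character_apply_ne_zero_of_ne_zero (A := Additive A) ha'
  refine ⟨{ toFun := fun g => AddCircle.toCircle (ratAddCircleToReal (c (Additive.ofMul g)))
            map_one' := by simp
            map_mul' := by
              intro x y
              simp [ofMul_mul, map_add, AddCircle.toCircle_add] }, ?_⟩
  intro h
  simp only [MonoidHom.coe_mk, OneHom.coe_mk] at h
  rw [show (1 : Circle) = AddCircle.toCircle (0 : AddCircle (1:ℝ)) by simp] at h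
  exact hc (ratAddCircleToReal_eq_zero (AddCircle.injective_toCircle one_ne_zero h))

/-- If every countable subgroup of a topological abelian group `G` is
h-embedded in `G`, then every countable subgroup of `G` is closed in `G`. -/
theorem statement2 (G : Type*) [CommGroup G] [TopologicalSpace G] [IsTopologicalGroup G]
    (hemb : ∀ H : Subgroup G, (H : Set G).Countable → IsHEmbedded H) :
    ∀ H : Subgroup G, (H : Set G).Countable → IsClosed (H : Set G) := by
  intro H hH
  refine isClosed_of_closure_subset ?_
  intro x hx
  by_contra hxH
  set K : Subgroup G := H ⊔ Subgroup.zpowers x with hK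
  have hxK : x ∈ K := Subgroup.mem_sup_right (Subgroup.mem_zpowers x)
  have hHK : H ≤ K := le_sup_left
  have hKc : (K : Set G).Countable := by
    have hsub : (K : Set G) ⊆ Set.image2 (· * ·) (H : Set G) (Subgroup.zpowers x : Set G) := by
      intro y hy
      obtain ⟨a, ha, b, hb, rfl⟩ := Subgroup.mem_sup.mp hy
      exact ⟨a, ha, b, hb, rfl⟩
    have hzc : (Subgroup.zpowers x : Set G).Countable := by
      rw [Subgroup.coe_zpowers]; exact Set.countable_range _
    exact (hH.image2 hzc _).mono hsub
  -- the element x as an element of K, not in H.subgroupOf K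
  set xK : K := ⟨x, hxK⟩ with hxKdef
  have hxne : (QuotientGroup.mk xK : K ⧸ H.subgroupOf K) ≠ 1 := by
    rw [Ne, QuotientGroup.eq_one_iff]
    exact fun hmem => hxH (Subgroup.mem_subgroupOf.mp hmem)
  obtain ⟨χ, hχ⟩ := exists_circle_char hxne
  set f : K →* Circle := χ.comp (QuotientGroup.mk' (H.subgroupOf K)) with hf
  obtain ⟨g, hgc, hgf⟩ := hemb K hKc f
  have hg1 : ∀ h ∈ H, g h = 1 := by
    intro h hh
    have : g (⟨h, hHK hh⟩ : K) = f ⟨h, hHK hh⟩ := hgf _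
    rw [this, hf]
    simp only [MonoidHom.comp_apply, QuotientGroup.mk'_apply]
    rw [show (QuotientGroup.mk (⟨h, hHK hh⟩ : K) : K ⧸ H.subgroupOf K) = 1 from
      (QuotientGroup.eq_one_iff _).mpr (Subgroup.mem_subgroupOf.mpr hh)]
    exact map_one χ
  have hcl : IsClosed (g ⁻¹' {1}) := (isClosed_singleton).preimage hgc
  have hgx : g x = 1 := by
    have : (H : Set G) ⊆ g ⁻¹' {1} := fun h hh => hg1 h hh
    exact (closure_minimal this hcl hx : g x ∈ ({1} : Set Circle))
  have : g x = χ (QuotientGroup.mk xK) := by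
    have := hgf xK
    simpa [hf] using this
  exact hχ (by rw [← this, hgx])


end
end

section
/- Let G be a topological abelian group such that every countable subgroup of G is h-embedded in G. Then every compact subset of G is finite. -/
open Topology Filter Set

noncomputable section

set_option maxHeartbeats 1000000
set_option synthInstance.maxHeartbeats 400000

namespace Statement3Proof

open MeasureTheory



open MeasureTheory

/-! ### Characters with values in the circle separate points of abelian groups -/

/-- The natural embedding `ℚ ⧸ ℤ → ℝ ⧸ ℤ`. -/
noncomputable def qmap : AddCircle (1 : ℚ) →+ AddCircle (1 : ℝ) :=
  QuotientAddGroup.map (AddSubgroup.zmultiples (1 : ℚ)) (AddSubgroup.zmultiples (1 : ℝ))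
    (Rat.castHom ℝ).toAddMonoidHom
    (by
      intro q hq
      obtain ⟨n, rfl⟩ := AddSubgroup.mem_zmultiples_iff.mp hq
      refine AddSubgroup.mem_comap.mpr (AddSubgroup.mem_zmultiples_iff.mpr ⟨n, ?_⟩)
      push_cast
      simp)

lemma qmap_eq_zero {x : AddCircle (1 : ℚ)} (hx : qmap x = 0) : x = 0 := by
  induction x using QuotientAddGroup.induction_on with
  | H q =>
    have hq : qmap ((q : ℚ ⧸ AddSubgroup.zmultiples (1 : ℚ)) : AddCircle (1 : ℚ))
        = ((q : ℝ) : AddCircle (1 : ℝ)) := rfl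
    rw [hq] at hx
    obtain ⟨n, hn⟩ := AddSubgroup.mem_zmultiples_iff.mp ((QuotientAddGroup.eq_zero_iff _).mp hx)
    refine (QuotientAddGroup.eq_zero_iff _).mpr (AddSubgroup.mem_zmultiples_iff.mpr ⟨n, ?_⟩)
    have : ((n • (1 : ℚ) : ℚ) : ℝ) = ((q : ℚ) : ℝ) := by push_cast at hn ⊢; simpa using hn
    exact_mod_cast this

/-- The natural map `ℚ ⧸ ℤ → Circle`. -/
noncomputable def ratToCircle : AddCircle (1 : ℚ) → Circle := fun x =>
  AddCircle.toCircle (qmap x)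

lemma ratToCircle_add (x y : AddCircle (1 : ℚ)) :
    ratToCircle (x + y) = ratToCircle x * ratToCircle y := by
  unfold ratToCircle
  rw [map_add, AddCircle.toCircle_add]

lemma ratToCircle_ne_one {x : AddCircle (1 : ℚ)} (hx : x ≠ 0) : ratToCircle x ≠ 1 := by
  intro h
  apply hx
  apply qmap_eq_zero
  have h0 : AddCircle.toCircle (0 : AddCircle (1 : ℝ)) = 1 := AddCircle.toCircle_zero
  exact AddCircle.injective_toCircle (T := (1 : ℝ)) one_ne_zero (h.trans h0.symm)

/-- Characters with values in the circle separate points of an abstract abelian group. -/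
lemma exists_circle_char {A : Type*} [CommGroup A] {a : A} (ha : a ≠ 1) :
    ∃ φ : A →* Circle, φ a ≠ 1 := by
  obtain ⟨c, hc⟩ := CharacterModule.exists_character_apply_ne_zero_of_ne_zero
    (A := Additive A) (a := Additive.ofMul a) (by simpa using ha)
  refine ⟨MonoidHom.mk' (fun x => ratToCircle (c (Additive.ofMul x))) ?_, ?_⟩
  · intro x y
    show ratToCircle (c (Additive.ofMul (x * y))) = _
    have : Additive.ofMul (x * y) = Additive.ofMul x + Additive.ofMul y := rfl
    rw [this, map_add, ratToCircle_add]
  · exact ratToCircle_ne_one hc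

/-! ### Subgroup generated by a countable set is countable -/

lemma countable_closure {G : Type*} [Group G] {s : Set G} (hs : s.Countable) :
    ((Subgroup.closure s : Subgroup G) : Set G).Countable := by
  haveI : Countable ↥(s ∪ s⁻¹) :=
    (hs.union (hs.preimage inv_injective)).to_subtype
  have hsub : (Subgroup.closure s : Set G) ⊆
      Set.range (fun l : List ↥(s ∪ s⁻¹) => (l.map Subtype.val).prod) := by
    intro x hx
    have hx' : x ∈ Submonoid.closure (s ∪ s⁻¹) := by
      rw [← Subgroup.closure_toSubmonoid]
      exact hx
    obtain ⟨l, hl, hprod⟩ := Submonoid.exists_list_of_mem_closure hx'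
    refine ⟨l.attach.map (fun y => (⟨y.1, hl y.1 y.2⟩ : ↥(s ∪ s⁻¹))), ?_⟩
    simp only [List.map_map]
    have : (Subtype.val ∘ fun y : {y // y ∈ l} => (⟨y.1, hl y.1 y.2⟩ : ↥(s ∪ s⁻¹)))
        = fun y : {y // y ∈ l} => y.1 := rfl
    rw [this, List.attach_map_subtype_val]
    exact hprod
  exact Set.Countable.mono hsub (Set.countable_range _)

/-! ### No nontrivial null sequences for all characters -/

lemma bohr_null_false {A : Type*} [CommGroup A] (e : ℕ → A) (L : Filter ℕ)
    [L.NeBot] [L.IsCountablyGenerated]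
    (hne : ∀ᶠ j in L, e j ≠ 1)
    (hconv : ∀ φ : A →* Circle, Tendsto (fun j => φ (e j)) L (𝓝 1)) : False := by
  classical
  let S : Subgroup (A → Circle) :=
    { carrier := {f | ∀ x y, f (x * y) = f x * f y}
      one_mem' := by intro x y; simp
      mul_mem' := by
        intro f g hf hg x y
        simp only [Pi.mul_apply, hf x y, hg x y]
        exact mul_mul_mul_comm _ _ _ _
      inv_mem' := by
        intro f hf x y
        simp only [Pi.inv_apply, hf x y, mul_inv] }
  have hSclosed : IsClosed (S : Set (A → Circle)) := by
    have : (S : Set (A → Circle)) = ⋂ (x : A) (y : A), {f | f (x * y) = f x * f y} := by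
      ext f
      simp [S, Set.mem_iInter]
    rw [this]
    exact isClosed_iInter fun x => isClosed_iInter fun y =>
      isClosed_eq (continuous_apply (x * y)) ((continuous_apply x).mul (continuous_apply y))
  haveI : CompactSpace ↥S := isCompact_iff_compactSpace.mp hSclosed.isCompact
  letI : MeasurableSpace ↥S := borel _
  haveI : BorelSpace ↥S := ⟨rfl⟩
  haveI : Nonempty ↥S := ⟨1⟩
  let K₀ : TopologicalSpace.PositiveCompacts ↥S :=
    ⟨⟨Set.univ, isCompact_univ⟩, by rw [interior_univ]; exact Set.univ_nonempty⟩
  let μ : Measure ↥S := Measure.haarMeasure K₀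
  haveI : IsProbabilityMeasure μ := ⟨by
    have := Measure.haarMeasure_self (K₀ := K₀)
    exact this⟩
  let F : ℕ → ↥S → ℂ := fun j φ => ((φ : A → Circle) (e j) : ℂ)
  have hFcont : ∀ j, Continuous (F j) := fun j =>
    continuous_subtype_val.comp ((continuous_apply (e j)).comp continuous_subtype_val)
  -- each nontrivial character integrates to zero
  have hzero : ∀ j, e j ≠ 1 → ∫ φ, F j φ ∂μ = 0 := by
    intro j hj
    obtain ⟨φ₀, hφ₀⟩ := exists_circle_char hj
    let ψ : ↥S := ⟨fun x => φ₀ x, fun x y => map_mul φ₀ x y⟩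
    have h1 : ∫ φ, F j (ψ * φ) ∂μ = ∫ φ, F j φ ∂μ :=
      integral_mul_left_eq_self (F j) ψ
    have h2 : (fun φ => F j (ψ * φ)) = fun φ => ((φ₀ (e j) : ℂ)) * F j φ := by
      funext φ
      show (((ψ * φ : ↥S) : A → Circle) (e j) : ℂ) = _
      have : ((ψ * φ : ↥S) : A → Circle) (e j)
          = (ψ : A → Circle) (e j) * (φ : A → Circle) (e j) := rfl
      rw [this]
      push_cast
      rfl
    rw [h2, integral_const_mul] at h1
    have hne1 : (φ₀ (e j) : ℂ) ≠ 1 := by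
      simpa [Circle.coe_eq_one] using hφ₀
    have : ((φ₀ (e j) : ℂ) - 1) * ∫ φ, F j φ ∂μ = 0 := by
      rw [sub_mul, one_mul, h1, sub_self]
    rcases mul_eq_zero.mp this with h | h
    · exact absurd (sub_eq_zero.mp h) hne1
    · exact h
  -- dominated convergence
  have hDCT : Tendsto (fun j => ∫ φ, F j φ ∂μ) L (𝓝 (∫ _, (1 : ℂ) ∂μ)) := by
    refine tendsto_integral_filter_of_dominated_convergence (fun _ => (1 : ℝ))
      (Eventually.of_forall fun j => (hFcont j).aestronglyMeasurable)
      (Eventually.of_forall fun j => Eventually.of_forall fun φ => ?_)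
      (integrable_const 1)
      (Eventually.of_forall fun φ => ?_)
    · show ‖((φ : A → Circle) (e j) : ℂ)‖ ≤ 1
      exact le_of_eq (Circle.norm_coe _)
    · have := hconv (MonoidHom.mk' (fun x => (φ : A → Circle) x) (fun x y => φ.2 x y))
      have h2 : Tendsto (fun j => (((MonoidHom.mk' (fun x => (φ : A → Circle) x)
          (fun x y => φ.2 x y)) (e j) : Circle) : ℂ)) L (𝓝 ((1 : Circle) : ℂ)) :=
        (continuous_subtype_val.tendsto _).comp this
      simpa using h2
  have hint1 : ∫ _, (1 : ℂ) ∂μ = 1 := by simp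
  rw [hint1] at hDCT
  have heq : (fun j => ∫ φ, F j φ ∂μ) =ᶠ[L] fun _ => (0 : ℂ) :=
    hne.mono fun j hj => hzero j hj
  have : Tendsto (fun _ : ℕ => (0 : ℂ)) L (𝓝 1) := hDCT.congr' heq
  exact one_ne_zero (tendsto_nhds_unique this tendsto_const_nhds)


end Statement3Proof

/-- If every countable subgroup of a topological abelian group `G` is
h-embedded in `G`, then every compact subset of `G` is finite. -/
theorem statement3 (G : Type*) [CommGroup G] [TopologicalSpace G] [IsTopologicalGroup G]
    (hemb : ∀ H : Subgroup G, (H : Set G).Countable → IsHEmbedded H) :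
    ∀ K : Set G, IsCompact K → K.Finite := by
  classical
  intro K hK
  by_contra hfin
  have hinf : K.Infinite := hfin
  let emb : ℕ ↪ ↥K := hinf.natEmbedding
  let c : ℕ → G := fun n => (emb n : G)
  have hc_inj : Function.Injective c := fun a b h => emb.injective (Subtype.ext h)
  have hcK : ∀ n, c n ∈ K := fun n => (emb n).2
  let D : Subgroup G := Subgroup.closure (Set.range c)
  have hDcnt : (D : Set G).Countable := Statement3Proof.countable_closure (countable_range c)
  have hcD : ∀ n, c n ∈ D := fun n => Subgroup.subset_closure (mem_range_self n)
  obtain ⟨d, hd⟩ := hDcnt.exists_eq_range ⟨1, D.one_mem⟩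
  have hdD : ∀ n, d n ∈ D := fun n => by
    have : d n ∈ Set.range d := mem_range_self n
    rwa [← hd] at this
  -- Main recursion step: characters can separate `d n` from a large part of `c`.
  have claim : ∀ J : Set ℕ, J.Infinite → ∀ n : ℕ,
      ∃ (J' : Set ℕ) (g : G →* Circle) (ε : ℝ), J' ⊆ J ∧ J'.Infinite ∧ Continuous g ∧ 0 < ε ∧
        ∀ j ∈ J', ε ≤ dist (g (c j)) (g (d n)) := by
    intro J hJ n
    haveI hLne : (atTop ⊓ 𝓟 J : Filter ℕ).NeBot :=
      frequently_mem_iff_neBot.mp (Nat.frequently_atTop_iff_infinite.mpr (by simpa using hJ))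
    by_cases hcase : ∀ g : G →* Circle, Continuous g →
        Tendsto (fun j => g (c j)) (atTop ⊓ 𝓟 J) (𝓝 (g (d n)))
    · exfalso
      refine Statement3Proof.bohr_null_false (A := ↥D)
        (fun j => (⟨c j, hcD j⟩ : ↥D) * (⟨d n, hdD n⟩ : ↥D)⁻¹) (atTop ⊓ 𝓟 J) ?_ ?_
      · refine Eventually.filter_mono inf_le_left ?_
        rw [← Nat.cofinite_eq_atTop]
        have hss : Set.Finite {j : ℕ | c j = d n} := Set.Subsingleton.finite
          (fun a (ha : c a = d n) b (hb : c b = d n) => hc_inj (ha.trans hb.symm))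
        refine eventually_cofinite.mpr (hss.subset fun j hj => ?_)
        simp only [Set.mem_setOf_eq, not_not, mul_inv_eq_one, Subtype.ext_iff] at hj
        exact hj
      · intro φ
        obtain ⟨g, hgc, hge⟩ := hemb D hDcnt φ
        have h := hcase g hgc
        have heq : ∀ j, g (c j) * (g (d n))⁻¹
            = φ ((⟨c j, hcD j⟩ : ↥D) * (⟨d n, hdD n⟩ : ↥D)⁻¹) := by
          intro j
          rw [map_mul, map_inv, ← hge ⟨c j, hcD j⟩, ← hge ⟨d n, hdD n⟩]
        have htend : Tendsto (fun j => g (c j) * (g (d n))⁻¹) (atTop ⊓ 𝓟 J)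
            (𝓝 (g (d n) * (g (d n))⁻¹)) := h.mul tendsto_const_nhds
        rw [mul_inv_cancel] at htend
        exact htend.congr heq
    · push_neg at hcase
      obtain ⟨g, hgc, hgt⟩ := hcase
      rw [Metric.tendsto_nhds] at hgt
      push_neg at hgt
      obtain ⟨ε, hε, hfreq⟩ := hgt
      have hfreq' : ∃ᶠ j in (atTop ⊓ 𝓟 J : Filter ℕ), ¬ dist (g (c j)) (g (d n)) < ε := by
        exact hfreq.mono fun j hj => not_lt.mpr hj
      have hJev : ∀ᶠ j in (atTop ⊓ 𝓟 J : Filter ℕ), j ∈ J :=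
        eventually_inf_principal.mpr (Eventually.of_forall fun j hj => hj)
      have hfreq2 : ∃ᶠ j in (atTop : Filter ℕ), j ∈ J ∧ ε ≤ dist (g (c j)) (g (d n)) :=
        ((hfreq'.and_eventually hJev).mono fun j hj => ⟨hj.2, not_lt.mp hj.1⟩).filter_mono
          inf_le_left
      exact ⟨{j | j ∈ J ∧ ε ≤ dist (g (c j)) (g (d n))}, g, ε, fun j hj => hj.1,
        Nat.frequently_atTop_iff_infinite.mp hfreq2, hgc, hε, fun j hj => hj.2⟩
  choose step stepg stepε hsub hstepinf hstepcont hsteppos hstepsep using claim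
  -- the decreasing sequence of infinite index sets
  let Jseq : ℕ → {J : Set ℕ // J.Infinite} := fun n =>
    Nat.rec ⟨Set.univ, Set.infinite_univ⟩
      (fun m ih => ⟨step ih.1 ih.2 m, hstepinf ih.1 ih.2 m⟩) n
  have hsucc : ∀ n, (Jseq (n + 1)).1 ⊆ (Jseq n).1 := fun n =>
    hsub (Jseq n).1 (Jseq n).2 n
  have hmono : ∀ m n, m ≤ n → (Jseq n).1 ⊆ (Jseq m).1 := by
    intro m n h
    induction h with
    | refl => exact subset_rfl
    | step h ih => exact (hsucc _).trans ih
  haveI hne : ∀ n, NeBot (𝓟 (Jseq n).1) := fun n =>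
    principal_neBot_iff.mpr (Jseq n).2.nonempty
  have hdir : Directed (· ≥ ·) (fun n => 𝓟 (Jseq n).1) := fun a b =>
    ⟨max a b, principal_mono.mpr (hmono a _ (le_max_left _ _)),
      principal_mono.mpr (hmono b _ (le_max_right _ _))⟩
  haveI : NeBot (⨅ n, 𝓟 (Jseq n).1) := iInf_neBot_of_directed hdir fun n => hne n
  let u : Ultrafilter ℕ := Ultrafilter.of (⨅ n, 𝓟 (Jseq n).1)
  have hu : ↑u ≤ (⨅ n, 𝓟 (Jseq n).1) := Ultrafilter.of_le _
  have humem : ∀ n, (Jseq n).1 ∈ u := fun n =>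
    le_principal_iff.mp (hu.trans (iInf_le _ n))
  -- the ultrafilter limit point in K
  have hle : ↑(Ultrafilter.map c u) ≤ 𝓟 K := by
    rw [Ultrafilter.coe_map, le_principal_iff, mem_map]
    exact univ_mem' hcK
  obtain ⟨x, hxK, hxle⟩ := hK.ultrafilter_le_nhds (Ultrafilter.map c u) hle
  have hxt : Tendsto c ↑u (𝓝 x) := by rwa [Ultrafilter.coe_map] at hxle
  -- the limit point belongs to D
  have hxD : x ∈ D := by
    by_contra hx
    set D' : Subgroup G := Subgroup.closure (Set.range c ∪ {x}) with hD'
    have hD'cnt : (D' : Set G).Countable :=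
      Statement3Proof.countable_closure ((countable_range c).union (countable_singleton x))
    have hDle : D ≤ D' := Subgroup.closure_mono subset_union_left
    have hxD' : x ∈ D' := Subgroup.subset_closure (Or.inr rfl)
    set N : Subgroup ↥D' := D.comap D'.subtype with hN
    have hx1 : QuotientGroup.mk' N ⟨x, hxD'⟩ ≠ 1 := by
      rw [QuotientGroup.mk'_apply, Ne, QuotientGroup.eq_one_iff]
      intro hmem
      exact hx (by simpa [hN, Subgroup.mem_comap, Subgroup.mem_subgroupOf] using hmem)
    obtain ⟨φ, hφ⟩ := Statement3Proof.exists_circle_char hx1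
    obtain ⟨g, hgc, hge⟩ := hemb D' hD'cnt (φ.comp (QuotientGroup.mk' N))
    have hgc1 : ∀ j, g (c j) = 1 := by
      intro j
      have hm : (⟨c j, hDle (hcD j)⟩ : ↥D') ∈ N :=
        Subgroup.mem_comap.mpr (by simpa using hcD j)
      have h1 : (φ.comp (QuotientGroup.mk' N)) ⟨c j, hDle (hcD j)⟩ = 1 := by
        have : QuotientGroup.mk' N ⟨c j, hDle (hcD j)⟩ = 1 := by
          rw [QuotientGroup.mk'_apply, QuotientGroup.eq_one_iff]
          exact hm
        simp [MonoidHom.comp_apply, this]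
      have h2 := hge ⟨c j, hDle (hcD j)⟩
      rw [h1] at h2
      exact h2
    have htd : Tendsto (fun j => g (c j)) ↑u (𝓝 (g x)) := (hgc.tendsto x).comp hxt
    have hconst : (fun j => g (c j)) = fun _ => (1 : Circle) := funext hgc1
    rw [hconst] at htd
    have hgx : g x = 1 := (tendsto_nhds_unique tendsto_const_nhds htd).symm
    have hgx' : g x = φ (QuotientGroup.mk' N ⟨x, hxD'⟩) := hge ⟨x, hxD'⟩
    exact hφ (by rw [← hgx', hgx])
  obtain ⟨n, hn⟩ : ∃ n, d n = x := by
    have : x ∈ Set.range d := by rw [← hd]; exact hxD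
    exact this
  -- final contradiction
  have hgncont : Continuous (stepg (Jseq n).1 (Jseq n).2 n) := hstepcont _ _ _
  have htd : Tendsto (fun j => stepg (Jseq n).1 (Jseq n).2 n (c j)) ↑u
      (𝓝 (stepg (Jseq n).1 (Jseq n).2 n x)) := (hgncont.tendsto x).comp hxt
  have hev1 : ∀ᶠ j in ↑u,
      dist (stepg (Jseq n).1 (Jseq n).2 n (c j)) (stepg (Jseq n).1 (Jseq n).2 n (d n))
        < stepε (Jseq n).1 (Jseq n).2 n := by
    have := Metric.tendsto_nhds.mp htd _ (hsteppos (Jseq n).1 (Jseq n).2 n)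
    rw [← hn] at this
    exact this
  have hev2 : ∀ᶠ j in ↑u, stepε (Jseq n).1 (Jseq n).2 n
      ≤ dist (stepg (Jseq n).1 (Jseq n).2 n (c j)) (stepg (Jseq n).1 (Jseq n).2 n (d n)) := by
    have hmem := humem (n + 1)
    have hJn1 : (Jseq (n + 1)).1 = step (Jseq n).1 (Jseq n).2 n := rfl
    refine Filter.eventually_iff.mpr (Filter.mem_of_superset hmem fun j hj => ?_)
    exact hstepsep (Jseq n).1 (Jseq n).2 n j (by rwa [hJn1] at hj)
  obtain ⟨j, hj1, hj2⟩ := (hev1.and hev2).exists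
  exact absurd hj1 (not_lt.mpr hj2)


end
end

section
/- Let G be a Hausdorff topological abelian group such that every countable subgroup of G is h-embedded in G. Then G is sequentially closed in its completion ϱG, i.e., no sequence of elements of G converges in ϱG to a point of ϱG ∖ G. -/
open Topology Filter Set

noncomputable section

namespace Aux
open MeasureTheory


/-- The standard character ℚ → Circle, q ↦ exp(2πiq). -/
def psi (q : ℚ) : Circle := AddCircle.toCircle ((q : ℝ) : AddCircle (1 : ℝ))

lemma psi_add (p q : ℚ) : psi (p + q) = psi p * psi q := by
  unfold psi
  rw [show (((p + q : ℚ) : ℝ) : AddCircle (1 : ℝ)) = ((p : ℝ) : AddCircle (1:ℝ)) + ((q : ℝ) : AddCircle (1:ℝ)) by rw [← AddCircle.coe_add]; norm_cast]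
  exact AddCircle.toCircle_add _ _

lemma psi_int (n : ℤ) : psi (n : ℚ) = 1 := by
  unfold psi
  have : (((n : ℚ) : ℝ) : AddCircle (1 : ℝ)) = 0 := by
    rw [AddCircle.coe_eq_zero_iff]
    exact ⟨n, by push_cast; simp⟩
  rw [this, AddCircle.toCircle_zero]

lemma psi_eq_one {q : ℚ} (h : psi q = 1) : ∃ n : ℤ, (n : ℚ) = q := by
  unfold psi at h
  rw [← AddCircle.toCircle_zero] at h
  have := AddCircle.injective_toCircle (one_ne_zero) h
  rw [AddCircle.coe_eq_zero_iff] at this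
  obtain ⟨n, hn⟩ := this
  exact ⟨n, by exact_mod_cast (by simpa using hn : ((n:ℝ) = (q:ℝ)))⟩

lemma psi_periodic : Function.Periodic psi 1 := by
  intro q
  rw [psi_add, show ((1:ℚ)) = ((1:ℤ) : ℚ) by norm_num, psi_int, mul_one]

/-- Lift of psi to AddCircle (1 : ℚ). -/
def Psi : AddCircle (1 : ℚ) → Circle := psi_periodic.lift

lemma Psi_coe (q : ℚ) : Psi (q : AddCircle (1:ℚ)) = psi q := rfl

lemma Psi_add (s t : AddCircle (1 : ℚ)) : Psi (s + t) = Psi s * Psi t := by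
  induction s using QuotientAddGroup.induction_on
  induction t using QuotientAddGroup.induction_on
  rw [← AddCircle.coe_add, Psi_coe, Psi_coe, Psi_coe, psi_add]

lemma Psi_ne_one {s : AddCircle (1 : ℚ)} (hs : s ≠ 0) : Psi s ≠ 1 := by
  induction s using QuotientAddGroup.induction_on with
  | H q =>
  intro h
  rw [Psi_coe] at h
  obtain ⟨n, hn⟩ := psi_eq_one h
  apply hs
  rw [AddCircle.coe_eq_zero_iff]
  exact ⟨n, by simpa using hn⟩

theorem exists_char_ne_one {A : Type*} [CommGroup A] {x : A} (hx : x ≠ 1) :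
    ∃ f : A →* Circle, f x ≠ 1 := by
  obtain ⟨c, hc⟩ := CharacterModule.exists_character_apply_ne_zero_of_ne_zero
    (A := Additive A) (a := Additive.ofMul x) (by simpa using hx)
  refine ⟨MonoidHom.mk' (fun z => Psi (c (Additive.ofMul z))) ?_, ?_⟩
  · intro a b
    show Psi (c (Additive.ofMul (a*b))) = _
    have : c (Additive.ofMul (a * b)) = c (Additive.ofMul a) + c (Additive.ofMul b) := by
      rw [show Additive.ofMul (a*b) = Additive.ofMul a + Additive.ofMul b from rfl, map_add]
    rw [this, Psi_add]
  · exact Psi_ne_one hc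


variable (A : Type*) [CommGroup A]

/-- All homomorphisms A → Circle, as a subgroup of the Pi group. -/
def homGrp : Subgroup (A → Circle) where
  carrier := Set.range (fun h : A →* Circle => ⇑h)
  mul_mem' := by rintro f g ⟨h1, rfl⟩ ⟨h2, rfl⟩; exact ⟨h1 * h2, rfl⟩
  one_mem' := ⟨1, rfl⟩
  inv_mem' := by rintro f ⟨h, rfl⟩; exact ⟨h⁻¹, rfl⟩

lemma homGrp_eq : (homGrp A : Set (A → Circle)) =
    {f : A → Circle | ∀ x y : A, f (x * y) = f x * f y} := by
  ext f
  constructor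
  · rintro ⟨h, rfl⟩ x y; exact map_mul h x y
  · intro hf; exact ⟨MonoidHom.mk' f hf, rfl⟩

lemma isClosed_homGrp : IsClosed (homGrp A : Set (A → Circle)) := by
  rw [homGrp_eq]
  have : {f : A → Circle | ∀ x y : A, f (x * y) = f x * f y} =
      ⋂ (x : A) (y : A), {f : A → Circle | f (x * y) = f x * f y} := by
    ext f; simp [Set.mem_iInter]
  rw [this]
  exact isClosed_iInter fun x => isClosed_iInter fun y =>
    isClosed_eq (continuous_apply (x * y)) ((continuous_apply x).mul (continuous_apply y))

theorem eventually_eq_one_of_forall_char_tendsto_one {A : Type*} [CommGroup A] (a : ℕ → A)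
    (h : ∀ f : A →* Circle, Tendsto (fun n => f (a n)) atTop (𝓝 (1 : Circle))) :
    ∀ᶠ n in atTop, a n = 1 := by
  by_contra hc
  rw [Filter.not_eventually] at hc
  obtain ⟨φ, hφ, hφne⟩ := Filter.extraction_of_frequently_atTop hc
  -- set up the compact group X of all characters of A
  set X := homGrp A with hX
  haveI : CompactSpace X := isCompact_iff_compactSpace.mp ((isClosed_homGrp A).isCompact)
  letI : MeasurableSpace X := borel X
  haveI : BorelSpace X := ⟨rfl⟩
  set K₀ : TopologicalSpace.PositiveCompacts X :=
    ⟨⟨Set.univ, isCompact_univ⟩, by rw [interior_univ]; exact Set.univ_nonempty⟩ with hK₀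
  set μ : Measure X := Measure.haarMeasure K₀ with hμ
  haveI : IsProbabilityMeasure μ := ⟨by
    have : (K₀ : Set X) = Set.univ := rfl
    rw [← this, hμ, Measure.haarMeasure_self]⟩
  -- the functions
  set F : ℕ → X → ℂ := fun n x => ((x : A → Circle) (a n) : ℂ) with hF
  have hFcont : ∀ n, Continuous (F n) := fun n =>
    continuous_subtype_val.comp ((continuous_apply (a n)).comp continuous_subtype_val)
  have hnorm : ∀ n x, ‖F n x‖ = 1 := by
    intro n x
    simp [hF, Circle.norm_coe]
  have hlim : ∀ x : X, Tendsto (fun n => F n x) atTop (𝓝 1) := by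
    rintro ⟨f, g, rfl⟩
    have : Tendsto (fun n => ((g (a n) : ℂ))) atTop (𝓝 ((1 : Circle) : ℂ)) :=
      (continuous_subtype_val.tendsto _).comp (h g)
    simpa using this
  have hDCT : Tendsto (fun n => ∫ x, F n x ∂μ) atTop (𝓝 (∫ _x, (1:ℂ) ∂μ)) := by
    refine tendsto_integral_of_dominated_convergence (fun _ => (1:ℝ))
      (fun n => (hFcont n).aestronglyMeasurable) (integrable_const 1)
      (fun n => Filter.Eventually.of_forall fun x => (hnorm n x).le)
      (Filter.Eventually.of_forall hlim)
  have hint1 : (∫ _x, (1:ℂ) ∂μ) = 1 := by simp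
  -- nontrivial characters integrate to zero
  have hzero : ∀ n, a n ≠ 1 → (∫ x, F n x ∂μ) = 0 := by
    intro n hn
    obtain ⟨f₀, hf₀⟩ := exists_char_ne_one hn
    set g₀ : X := ⟨⇑f₀, ⟨f₀, rfl⟩⟩ with hg₀
    have key : (∫ x, F n (g₀ * x) ∂μ) = ∫ x, F n x ∂μ :=
      integral_mul_left_eq_self (F n) g₀
    have expand : ∀ x : X, F n (g₀ * x) = ((f₀ (a n) : ℂ)) * F n x := by
      intro x
      show (((g₀ * x : X) : A → Circle) (a n) : ℂ) = _
      rw [Subgroup.coe_mul]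
      simp [hg₀, hF]
    rw [show (fun x => F n (g₀ * x)) = fun x => ((f₀ (a n) : ℂ)) * F n x from funext expand,
      MeasureTheory.integral_const_mul] at key
    have hne : ((f₀ (a n) : ℂ)) - 1 ≠ 0 := by
      intro hh
      apply hf₀
      apply Circle.coe_injective
      rw [Circle.coe_one, ← sub_eq_zero]
      exact hh
    have : ((f₀ (a n) : ℂ) - 1) * ∫ x, F n x ∂μ = 0 := by
      rw [sub_mul, key, one_mul, sub_self]
    rcases mul_eq_zero.mp this with h' | h'
    · exact absurd h' hne
    · exact h'
  rw [hint1] at hDCT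
  have h0 : Tendsto (fun k => ∫ x, F (φ k) x ∂μ) atTop (𝓝 (1:ℂ)) :=
    hDCT.comp hφ.tendsto_atTop
  have h0' : (fun k => ∫ x, F (φ k) x ∂μ) = fun _ => (0:ℂ) :=
    funext fun k => hzero (φ k) (hφne k)
  rw [h0'] at h0
  exact one_ne_zero (tendsto_nhds_unique h0 tendsto_const_nhds)


end Aux

/-- A Hausdorff topological abelian group all of whose countable subgroups are
h-embedded is sequentially closed in its completion `ϱG` (here `ϱG` is formalized as any
complete Hausdorff topological abelian group in which `G` embeds as a dense topological
subgroup): no sequence of elements of `G` converges in `ϱG` to a point outside `G`. -/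
theorem statement4 (G ϱG : Type*) [CommGroup G] [TopologicalSpace G] [IsTopologicalGroup G]
    [T2Space G] [CommGroup ϱG] [TopologicalSpace ϱG] [IsTopologicalGroup ϱG] [T2Space ϱG]
    (hcomplete : @CompleteSpace ϱG (IsTopologicalGroup.rightUniformSpace ϱG))
    (e : G →* ϱG) (he : Topology.IsEmbedding ⇑e) (hdense : DenseRange ⇑e)
    (hemb : ∀ H : Subgroup G, (H : Set G).Countable → IsHEmbedded H) :
    ∀ (u : ℕ → G) (y : ϱG),
      Filter.Tendsto (fun n => e (u n)) Filter.atTop (nhds y) → y ∈ Set.range ⇑e := by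
  intro u y hy
  set w : ℕ → G := fun n => u (n + 1) * (u n)⁻¹ with hwdef
  -- e (w n) → 1
  have hew : Tendsto (fun n => e (w n)) atTop (𝓝 (1 : ϱG)) := by
    have h1 : Tendsto (fun n => e (u (n + 1))) atTop (𝓝 y) :=
      hy.comp (tendsto_add_atTop_nat 1)
    have h2 : Tendsto (fun n => (e (u n))⁻¹) atTop (𝓝 y⁻¹) := hy.inv
    have := h1.mul h2
    rw [mul_inv_cancel] at this
    simpa [hwdef, map_mul, map_inv] using this
  -- w → 1 in G
  have hw : Tendsto w atTop (𝓝 (1 : G)) := by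
    rw [he.toIsInducing.tendsto_nhds_iff]
    simpa [map_one, Function.comp_def] using hew
  -- the countable subgroup generated by the w's
  set H : Subgroup G := Subgroup.closure (Set.range w) with hHdef
  have hcount : (H : Set G).Countable := by
    haveI : Countable (FreeGroup ℕ) := FreeGroup.toWord_injective.countable
    have hset : (H : Set G) = Set.range ⇑(FreeGroup.lift w) := by
      rw [hHdef, ← FreeGroup.range_lift_eq_closure]
      rfl
    rw [hset]
    exact Set.countable_range _
  have hH : IsHEmbedded H := hemb H hcount
  set w' : ℕ → H := fun n => ⟨w n, Subgroup.subset_closure (Set.mem_range_self n)⟩ with hw'def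
  have hkey : ∀ f : H →* Circle, Tendsto (fun n => f (w' n)) atTop (𝓝 (1 : Circle)) := by
    intro f
    obtain ⟨g, gcont, hg⟩ := hH f
    have : Tendsto (fun n => g (w n)) atTop (𝓝 (g 1)) := (gcont.tendsto 1).comp hw
    rw [map_one] at this
    refine this.congr fun n => ?_
    exact hg (w' n)
  have hev : ∀ᶠ n in atTop, w' n = 1 := Aux.eventually_eq_one_of_forall_char_tendsto_one w' hkey
  obtain ⟨N, hN⟩ := eventually_atTop.mp hev
  have hconst : ∀ n, N ≤ n → u n = u N := by
    intro n hn
    induction n with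
    | zero => rw [Nat.le_zero.mp hn]
    | succ m ih =>
      rcases Nat.lt_or_ge N (m + 1) with hlt | hge
      · have hm : N ≤ m := Nat.lt_succ_iff.mp hlt
        have hw1 : w m = 1 := congrArg Subtype.val (hN m hm)
        have : u (m + 1) = u m := by
          have := hw1
          rw [hwdef] at this
          exact mul_inv_eq_one.mp this
        rw [this, ih hm]
      · have : N = m + 1 := le_antisymm hn hge
        rw [this]
  -- conclude
  have hNlim : Tendsto (fun n => e (u n)) atTop (𝓝 (e (u N))) := by
    apply Tendsto.congr' _ tendsto_const_nhds
    filter_upwards [eventually_ge_atTop N] with n hn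
    rw [hconst n hn]
  exact ⟨u N, (tendsto_nhds_unique hNlim hy)⟩

end
end

section
/- Let G be a Hausdorff pseudocompact topological abelian group. Then every compact subset of the dual group G^∧ (with the compact-open topology) is finite. -/
open Topology Filter Set

noncomputable section

lemma IsPseudocompact.isClosed_range {G X : Type*} [TopologicalSpace G] [TopologicalSpace X]
    [TopologicalSpace.MetrizableSpace X] (hps : IsPseudocompact G) (ϕ : G → X)
    (hϕ : Continuous ϕ) : IsClosed (Set.range ϕ) := by
  letI : MetricSpace X := TopologicalSpace.metrizableSpaceMetric X
  rw [← closure_subset_iff_isClosed]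
  intro p hp
  by_contra hpr
  have hd : ∀ x : G, 0 < dist (ϕ x) p := by
    intro x
    rw [dist_pos]
    exact fun h => hpr ⟨x, h⟩
  set f : G → ℝ := fun x => (dist (ϕ x) p)⁻¹ with hf
  have hfc : Continuous f := ((continuous_dist.comp (hϕ.prodMk continuous_const))).inv₀
    (fun x => (hd x).ne')
  obtain ⟨r, hr⟩ := (hps f hfc).subset_closedBall 0
  obtain ⟨q, ⟨x, rfl⟩, hq⟩ := Metric.mem_closure_iff.mp hp ((|r| + 1)⁻¹)
    (by positivity)
  have h1 : f x ≤ |r| := by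
    have h := hr ⟨x, rfl⟩
    simp only [Metric.mem_closedBall, Real.dist_eq, sub_zero] at h
    exact (le_abs_self _).trans (h.trans (le_abs_self r))
  have h2 : (|r| + 1 : ℝ) ≤ f x := by
    rw [dist_comm] at hq
    rw [hf]
    exact (le_inv_comm₀ (by positivity) (hd x)).mpr hq.le
  linarith

lemma factor_continuous {G : Type*} [CommGroup G] [TopologicalSpace G]
    (hps : IsPseudocompact G) (e : G →* (ℕ → Circle)) (he : Continuous e)
    (f : G → Circle) (hfc : Continuous f) (hfm : ∀ x y, f (x * y) = f x * f y)
    (hff : ∀ x y, e x = e y → f x = f y) :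
    ∃ ψ : ↥e.range → Circle, Continuous ψ ∧
      ∀ (x : G) (h : e x ∈ e.range), ψ ⟨e x, h⟩ = f x := by
  classical
  have hf1 : f 1 = 1 := by
    have h := hfm 1 1; rw [mul_one] at h; exact left_eq_mul.mp h
  set ep : G →* (ℕ → Circle) :=
    { toFun := fun x n => Nat.casesOn n (f x) (fun m => e x m)
      map_one' := by funext n; cases n with
        | zero => simpa using hf1
        | succ m => simp
      map_mul' := by intro x y; funext n; cases n with
        | zero => simpa using hfm x y
        | succ m => simp } with hepdef
  have hepc : Continuous ep := by
    apply continuous_pi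
    intro n
    cases n with
    | zero => exact hfc
    | succ m => exact (continuous_apply m).comp he
  have hepval0 : ∀ x : G, ep x 0 = f x := fun x => rfl
  have hepvalS : ∀ (x : G) (m : ℕ), ep x (m + 1) = e x m := fun x m => rfl
  -- ranges are compact
  have hSclosed : IsClosed (Set.range ⇑ep) := hps.isClosed_range _ hepc
  haveI : CompactSpace ↥(Set.range ⇑ep) :=
    isCompact_iff_compactSpace.mp (hSclosed.isCompact)
  -- the projection from the augmented range to the range of `e`
  have hmem : ∀ v : ↥(Set.range ⇑ep), (fun n => (v : ℕ → Circle) (n + 1)) ∈ e.range := by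
    rintro ⟨v, x, rfl⟩
    exact ⟨x, rfl⟩
  set p : ↥(Set.range ⇑ep) → ↥e.range := fun v => ⟨fun n => (v : ℕ → Circle) (n + 1), hmem v⟩
    with hpdef
  have hpc : Continuous p := by
    apply Continuous.subtype_mk
    exact continuous_pi fun n => (continuous_apply (n + 1)).comp continuous_subtype_val
  have hpsurj : Function.Surjective p := by
    rintro ⟨w, x, rfl⟩
    exact ⟨⟨ep x, ⟨x, rfl⟩⟩, Subtype.ext rfl⟩
  -- the factored map
  have hrep : ∀ h : ↥e.range, ∃ x : G, e x = (h : ℕ → Circle) := fun h => h.2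
  set ψ : ↥e.range → Circle := fun h => f (hrep h).choose with hψdef
  have hψval : ∀ (x : G) (h : e x ∈ e.range), ψ ⟨e x, h⟩ = f x := by
    intro x h
    exact hff _ _ ((hrep ⟨e x, h⟩).choose_spec)
  refine ⟨ψ, ?_, hψval⟩
  -- continuity via the quotient map `p`
  have hq : Topology.IsQuotientMap p := (hpc.isClosedMap).isQuotientMap hpc hpsurj
  rw [hq.continuous_iff]
  have : ψ ∘ p = fun v : ↥(Set.range ⇑ep) => (v : ℕ → Circle) 0 := by
    funext v
    obtain ⟨w, x, rfl⟩ := v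
    have h1 : p ⟨ep x, ⟨x, rfl⟩⟩ = ⟨e x, ⟨x, rfl⟩⟩ := Subtype.ext rfl
    simp only [Function.comp_apply, h1]
    exact hψval x ⟨x, rfl⟩
  rw [this]
  exact (continuous_apply 0).comp continuous_subtype_val

open MeasureTheory in
lemma integral_char_eq_zero {H : Type*} [CommGroup H] [TopologicalSpace H] [IsTopologicalGroup H]
    [MeasurableSpace H] [BorelSpace H] [LocallyCompactSpace H]
    (μ : Measure H) [μ.IsMulLeftInvariant] (σ : H → Circle) (hσ : Continuous σ)
    (hm : ∀ a b, σ (a * b) = σ a * σ b) (a : H) (ha : σ a ≠ 1) :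
    ∫ h, (σ h : ℂ) ∂μ = 0 := by
  have key := MeasureTheory.integral_mul_left_eq_self (μ := μ) (fun h => (σ h : ℂ)) a
  simp only [hm, Circle.coe_mul] at key
  rw [MeasureTheory.integral_const_mul] at key
  have h2 : ((σ a : ℂ) - 1) * ∫ h, (σ h : ℂ) ∂μ = 0 := by
    rw [sub_mul, one_mul, key, sub_self]
  rcases mul_eq_zero.mp h2 with h | h
  · exfalso
    apply ha
    have : (σ a : ℂ) = ((1 : Circle) : ℂ) := by
      rw [sub_eq_zero] at h; simpa using h
    exact Subtype.coe_injective this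
  · exact h

/-- For a Hausdorff pseudocompact topological abelian group `G`, every compact
subset of the dual group `G^∧` (with the compact-open topology) is finite. -/
theorem statement6 (G : Type*) [CommGroup G] [TopologicalSpace G] [IsTopologicalGroup G]
    [T2Space G] (hps : IsPseudocompact G) :
    ∀ K : Set (PontryaginDual G), IsCompact K → K.Finite := by
  classical
  intro K hK
  rw [← Set.not_infinite]
  intro hinf
  -- distinct characters in K
  set χ : ℕ → PontryaginDual G := fun n => (Set.Infinite.natEmbedding K hinf n : PontryaginDual G) with hχdef
  have hχK : ∀ n, χ n ∈ K := fun n => (Set.Infinite.natEmbedding K hinf n).2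
  have hχinj : Function.Injective χ :=
    fun m n h => (Set.Infinite.natEmbedding K hinf).injective (Subtype.ext h)
  -- the diagonal homomorphism
  set e : G →* (ℕ → Circle) :=
    { toFun := fun x n => χ n x
      map_one' := by funext n; exact map_one (χ n)
      map_mul' := by intro x y; funext n; exact map_mul (χ n) x y } with hedef
  have hec : Continuous ⇑e := continuous_pi fun n => map_continuous (χ n)
  -- evaluation into the product
  set Λ : PontryaginDual G → (G → Circle) := fun φ => ⇑φ with hΛdef
  have hΛc : Continuous Λ := continuous_pi fun x => by
    have h : Continuous fun φ : PontryaginDual G => φ.toContinuousMap x :=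
      (continuous_eval_const x).comp
        (ContinuousMonoidHom.isInducing_toContinuousMap G Circle).continuous
    exact h
  have hΛinj : Function.Injective Λ := fun φ₁ φ₂ h => DFunLike.coe_injective h
  -- the closed set of fibre-constant functions
  set Fib : Set (G → Circle) := {f | ∀ x y, e x = e y → f x = f y} with hFibdef
  have hFibcl : IsClosed Fib := by
    have : Fib = ⋂ (x : G), ⋂ (y : G), {f : G → Circle | e x = e y → f x = f y} := by
      ext f; simp [hFibdef]
    rw [this]
    refine isClosed_iInter fun x => isClosed_iInter fun y => ?_
    by_cases h : e x = e y
    · simp only [h, forall_const, eq_self_iff_true, true_implies]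
      exact isClosed_eq (continuous_apply x) (continuous_apply y)
    · simp only [h, false_implies]
      exact isClosed_univ
  set F : Set (G → Circle) := (Λ '' K) ∩ Fib with hFdef
  have hFcomp : IsCompact F := (hK.image hΛc).inter_right hFibcl
  have hχF : ∀ n, Λ (χ n) ∈ F := by
    intro n
    refine ⟨⟨χ n, hχK n, rfl⟩, fun x y h => congrFun h n⟩
  have hFinf : F.Infinite :=
    Set.infinite_of_injective_forall_mem (hΛinj.comp hχinj) hχF
  -- instances for the compact group `H = range e`
  have hecl : IsClosed (Set.range ⇑e) := hps.isClosed_range _ hec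
  haveI : CompactSpace ↥e.range := isCompact_iff_compactSpace.mp
    (by rw [MonoidHom.coe_range]; exact hecl.isCompact)
  -- global representatives
  have hrep : ∀ h : ↥e.range, ∃ x : G, e x = (h : ℕ → Circle) := fun h => h.2
  choose rp hrp using hrep
  have hmemx : ∀ x : G, e x ∈ e.range := fun x => ⟨x, rfl⟩
  have hsub : ∀ h : ↥e.range, h = ⟨e (rp h), hmemx _⟩ := fun h => Subtype.ext (hrp h).symm
  -- the factored characters
  set T := ↥F with hTdef
  have hT : ∀ t : T, ∃ ψ : ↥e.range → Circle, Continuous ψ ∧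
      ∀ (x : G) (h : e x ∈ e.range), ψ ⟨e x, h⟩ = (t : G → Circle) x := by
    rintro ⟨f, ⟨φ, hφK, rfl⟩, hfib⟩
    exact factor_continuous hps e hec (Λ φ) (map_continuous φ)
      (fun x y => map_mul φ x y) hfib
  choose Ψ hΨc hΨval using hT
  have hΨrp : ∀ (t : T) (h : ↥e.range), Ψ t h = (t : G → Circle) (rp h) := by
    intro t h
    conv_lhs => rw [hsub h]
    exact hΨval t (rp h) (hmemx _)
  have hΨinj : ∀ t₁ t₂ : T, Ψ t₁ = Ψ t₂ → t₁ = t₂ := by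
    intro t₁ t₂ h
    apply Subtype.ext; funext x
    calc (t₁ : G → Circle) x = Ψ t₁ ⟨e x, hmemx x⟩ := (hΨval t₁ x (hmemx x)).symm
      _ = Ψ t₂ ⟨e x, hmemx x⟩ := by rw [h]
      _ = (t₂ : G → Circle) x := hΨval t₂ x (hmemx x)
  have hΨmul : ∀ (t : T) (h₁ h₂ : ↥e.range), Ψ t (h₁ * h₂) = Ψ t h₁ * Ψ t h₂ := by
    rintro ⟨f, ⟨φ, hφK, rfl⟩, hfib⟩ h₁ h₂
    set t : T := ⟨Λ φ, ⟨φ, hφK, rfl⟩, hfib⟩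
    have hx₁ := hrp h₁
    have hx₂ := hrp h₂
    have hmulmem : h₁ * h₂ = ⟨e (rp h₁ * rp h₂), hmemx _⟩ := by
      apply Subtype.ext
      show ((h₁ : ℕ → Circle) * (h₂ : ℕ → Circle)) = e (rp h₁ * rp h₂)
      rw [map_mul, hx₁, hx₂]
    rw [hmulmem, hΨval t _ (hmemx _), hΨrp t h₁, hΨrp t h₂]
    exact map_mul φ _ _
  -- `T` is an infinite compact metrizable space
  haveI : CompactSpace T := isCompact_iff_compactSpace.mp hFcomp
  haveI : Infinite T := Set.infinite_coe_iff.mpr hFinf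
  haveI : Nonempty ↥e.range := ⟨1⟩
  haveI : SecondCountableTopology Circle := inferInstance
  haveI : SecondCountableTopology (ℕ → Circle) := inferInstance
  haveI : SecondCountableTopology ↥e.range :=
    TopologicalSpace.secondCountableTopology_induced _ _ ((↑) : ↥e.range → (ℕ → Circle))
  haveI : TopologicalSpace.SeparableSpace ↥e.range :=
    TopologicalSpace.SecondCountableTopology.to_separableSpace
  set q : ℕ → ↥e.range := TopologicalSpace.denseSeq _ with hqdef
  have hq : DenseRange q := TopologicalSpace.denseRange_denseSeq _
  set Θ : T → (ℕ → Circle) := fun t n => (t : G → Circle) (rp (q n)) with hΘdef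
  have hΘc : Continuous Θ := by
    apply continuous_pi
    intro n
    exact (continuous_apply (rp (q n))).comp continuous_subtype_val
  have hΘinj : Function.Injective Θ := by
    intro t₁ t₂ h
    apply hΨinj
    apply hq.equalizer (hΨc t₁) (hΨc t₂)
    funext n
    simp only [Function.comp_apply]
    rw [hΨrp t₁, hΨrp t₂]
    exact congrFun h n
  haveI : TopologicalSpace.MetrizableSpace T :=
    (hΘc.isClosedEmbedding hΘinj).isEmbedding.metrizableSpace
  letI : MetricSpace T := TopologicalSpace.metrizableSpaceMetric T
  -- a non-isolated point
  have hex : ∃ t₀ : T, ¬ IsOpen ({t₀} : Set T) := by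
    by_contra hcon
    push_neg at hcon
    haveI : DiscreteTopology T := discreteTopology_iff_isOpen_singleton.mpr hcon
    haveI : Finite T := finite_of_compact_of_discrete
    exact not_finite T
  obtain ⟨t₀, ht₀⟩ := hex
  have hseq : ∀ k : ℕ, ∃ t : T, t ≠ t₀ ∧ dist t t₀ < 1 / (k + 1) := by
    intro k
    by_contra hcon
    push_neg at hcon
    apply ht₀
    have : ({t₀} : Set T) = Metric.ball t₀ (1 / (k + 1)) := by
      apply Set.eq_of_subset_of_subset
      · rintro t rfl
        simp [Metric.mem_ball]
        positivity
      · intro t ht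
        rw [Metric.mem_ball] at ht
        by_contra hne
        exact absurd ht (not_lt.mpr (hcon t (by simpa using hne)))
    rw [this]
    exact Metric.isOpen_ball
  choose u hu hud using hseq
  have hulim : Tendsto u atTop (𝓝 t₀) := by
    rw [tendsto_iff_dist_tendsto_zero]
    refine squeeze_zero (fun k => dist_nonneg) (fun k => (hud k).le)
      tendsto_one_div_add_atTop_nhds_zero_nat
  -- Haar measure on H
  letI : MeasurableSpace ↥e.range := borel _
  haveI : BorelSpace ↥e.range := ⟨rfl⟩
  set μ : MeasureTheory.Measure ↥e.range := MeasureTheory.Measure.haar with hμdef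
  -- each integral vanishes
  have hzero : ∀ k, ∫ h, ((Ψ (u k) h : ℂ) * (starRingEnd ℂ) ((Ψ t₀ h : ℂ))) ∂μ = 0 := by
    intro k
    set σ : ↥e.range → Circle := fun h => Ψ (u k) h * (Ψ t₀ h)⁻¹ with hσdef
    have hσc : Continuous σ := (hΨc _).mul (hΨc _).inv
    have hσm : ∀ a b, σ (a * b) = σ a * σ b := by
      intro a b
      simp only [hσdef, hΨmul, mul_inv]
      exact mul_mul_mul_comm _ _ _ _
    have hnontriv : ∃ a, σ a ≠ 1 := by
      by_contra hcon
      push_neg at hcon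
      apply hu k
      apply hΨinj
      funext h
      have := hcon h
      rw [hσdef] at this
      simpa [mul_inv_eq_one] using this
    obtain ⟨a, ha⟩ := hnontriv
    have hint := integral_char_eq_zero μ σ hσc hσm a ha
    rw [← hint]
    congr 1
    funext h
    rw [hσdef]
    simp only [Circle.coe_mul, Circle.coe_inv_eq_conj]
  -- dominated convergence
  have hmc : Continuous fun z : Circle => (z : ℂ) := continuous_induced_dom
  have hlim : Tendsto (fun k => ∫ h, ((Ψ (u k) h : ℂ) * (starRingEnd ℂ) ((Ψ t₀ h : ℂ))) ∂μ)
      atTop (𝓝 (∫ _h : ↥e.range, (1 : ℂ) ∂μ)) := by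
    apply MeasureTheory.tendsto_integral_of_dominated_convergence (bound := fun _ => (1 : ℝ))
    · intro k
      exact ((hmc.comp (hΨc (u k))).mul
        (Complex.continuous_conj.comp (hmc.comp (hΨc t₀)))).aestronglyMeasurable
    · exact MeasureTheory.integrable_const 1
    · intro k
      filter_upwards with h
      rw [norm_mul, RCLike.norm_conj]
      rw [Circle.norm_coe, Circle.norm_coe, mul_one]
    · filter_upwards with h
      -- pointwise convergence
      have h1 : Tendsto (fun k => Ψ (u k) h) atTop (𝓝 (Ψ t₀ h)) := by
        simp only [hΨrp]
        exact (((continuous_apply (rp h)).comp continuous_subtype_val).tendsto t₀).comp hulim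
      have h2 : Tendsto (fun k => ((Ψ (u k) h : ℂ) * (starRingEnd ℂ) ((Ψ t₀ h : ℂ))))
          atTop (𝓝 ((Ψ t₀ h : ℂ) * (starRingEnd ℂ) ((Ψ t₀ h : ℂ)))) :=
        ((hmc.tendsto _).comp h1).mul tendsto_const_nhds
      have h3 : (Ψ t₀ h : ℂ) * (starRingEnd ℂ) ((Ψ t₀ h : ℂ)) = 1 := by
        rw [Complex.mul_conj]
        simp
      rwa [h3] at h2
  rw [show (fun k => ∫ h, ((Ψ (u k) h : ℂ) * (starRingEnd ℂ) ((Ψ t₀ h : ℂ))) ∂μ)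
      = fun _ => (0 : ℂ) from funext hzero] at hlim
  have hconst : ∫ _h : ↥e.range, (1 : ℂ) ∂μ = 0 := tendsto_nhds_unique hlim tendsto_const_nhds
  have hμpos : 0 < μ Set.univ := by
    apply IsOpen.measure_pos μ isOpen_univ
    exact Set.univ_nonempty
  have hμfin : μ Set.univ < ⊤ := MeasureTheory.measure_lt_top μ _
  have hne : (μ Set.univ).toReal ≠ 0 :=
    (ENNReal.toReal_pos hμpos.ne' hμfin.ne).ne'
  rw [MeasureTheory.integral_const, Complex.real_smul, mul_one] at hconst
  exact hne (Complex.ofReal_eq_zero.mp hconst)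

end
end

section
/- Let G be a reflexive Hausdorff topological abelian group. Then G is precompact if and only if every compact subset of the dual group G^∧ (with the compact-open topology) is finite. -/
open Topology Filter Set

noncomputable section

-- NSS for Circle (proved in nss.lean, inline here)
lemma circle_exp_pow (t : ℝ) (n : ℕ) : Circle.exp t ^ n = Circle.exp (n * t) := by
  induction n with
  | zero => simp
  | succ k ih =>
    rw [pow_succ, ih, ← Circle.exp_add]
    congr 1
    push_cast
    ring

lemma circle_re_pow (z : Circle) (n : ℕ) :
    ((z ^ n : Circle) : ℂ).re = Real.cos (n * Complex.arg (z : ℂ)) := by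
  conv_lhs => rw [← Circle.exp_arg z]
  rw [circle_exp_pow, Circle.coe_exp]
  exact_mod_cast Complex.exp_ofReal_mul_I_re _

lemma circle_nss {z : Circle} (h : ∀ n : ℕ, (1/2 : ℝ) < ((z ^ n : Circle) : ℂ).re) : z = 1 := by
  by_contra hz
  set θ := Complex.arg (z : ℂ) with hθ
  have hθ0 : θ ≠ 0 := by
    intro h0
    apply hz
    have := Circle.exp_arg z
    rw [← hθ, h0, Circle.exp_zero] at this
    exact this.symm
  set a := |θ| with ha
  have ha0 : 0 < a := abs_pos.mpr hθ0
  have hapi : a ≤ Real.pi := abs_le.mpr ⟨(Complex.neg_pi_lt_arg _).le, Complex.arg_le_pi _⟩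
  have hπ : (0:ℝ) < Real.pi := Real.pi_pos
  obtain ⟨n, hn1, hn2⟩ : ∃ n : ℕ, Real.pi/3 ≤ n * a ∧ (n:ℝ) * a ≤ Real.pi := by
    rcases le_or_gt a (Real.pi/3) with hle | hlt
    · refine ⟨⌈(Real.pi/3)/a⌉₊, ?_, ?_⟩
      · rw [← div_le_iff₀ ha0]
        exact Nat.le_ceil _
      · have h1 : (⌈(Real.pi/3)/a⌉₊ : ℝ) < (Real.pi/3)/a + 1 :=
          Nat.ceil_lt_add_one (by positivity)
        have h2 : (⌈(Real.pi/3)/a⌉₊ : ℝ) * a < ((Real.pi/3)/a + 1) * a :=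
          mul_lt_mul_of_pos_right h1 ha0
        rw [add_mul, div_mul_cancel₀ _ ha0.ne'] at h2
        nlinarith
    · exact ⟨1, by push_cast; nlinarith, by push_cast; linarith⟩
  have hcos : Real.cos (n * a) ≤ 1/2 := by
    calc Real.cos (n*a) ≤ Real.cos (Real.pi/3) :=
          Real.cos_le_cos_of_nonneg_of_le_pi (by positivity) hn2 hn1
    _ = 1/2 := Real.cos_pi_div_three
  have hre := h n
  rw [circle_re_pow, ← hθ] at hre
  have heq : Real.cos (n * θ) = Real.cos (n * a) := by
    rcases abs_cases θ with ⟨h1, _⟩ | ⟨h1, _⟩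
    · rw [ha, h1]
    · rw [ha, h1, mul_neg, Real.cos_neg]
  rw [heq] at hre
  linarith

section V

/-- The standard neighborhood of `1` in `Circle` containing no nontrivial subgroup. -/
def Vnss : Set Circle := {z : Circle | (1/2 : ℝ) < (z : ℂ).re}

lemma Vnss_open : IsOpen Vnss := by
  have : Continuous fun z : Circle => ((z : ℂ)).re := Complex.continuous_re.comp continuous_subtype_val
  exact isOpen_lt continuous_const this

lemma Vnss_one : (1 : Circle) ∈ Vnss := by
  simp only [Vnss, Set.mem_setOf_eq, OneMemClass.coe_one, Complex.one_re]
  norm_num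

end V

/-- A reflexive Hausdorff topological abelian group is precompact (= totally
bounded in its group uniformity) iff every compact subset of its dual group is finite. -/
theorem statement7 (G : Type*) [CommGroup G] [TopologicalSpace G] [IsTopologicalGroup G]
    [T2Space G] (href : IsHomeomorph ⇑(pontrEval G)) :
    @TotallyBounded G (IsTopologicalGroup.rightUniformSpace G) Set.univ ↔
      ∀ K : Set (PontryaginDual G), IsCompact K → K.Finite := by
  letI : UniformSpace G := IsTopologicalGroup.rightUniformSpace G
  set α : G →* PontryaginDual (PontryaginDual G) := pontrEval G with hα
  have huniv : (@uniformity G (IsTopologicalGroup.rightUniformSpace G)) =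
      comap (fun p : G × G => p.2 / p.1) (𝓝 1) := by simp only [div_eq_mul_inv]; rfl
  have heval : ∀ (y : G), Continuous fun χ : PontryaginDual G => χ y := by
    intro y
    have h : Continuous fun χ : PontryaginDual G => χ.toContinuousMap y :=
      (continuous_eval_const y).comp
        (ContinuousMonoidHom.isInducing_toContinuousMap G Circle).continuous
    exact h
  constructor
  · -- totally bounded → compact subsets of the dual are finite
    intro tb K hK
    -- choose W with the three-fold product property
    obtain ⟨W₁, hW₁o, hW₁1, hW₁⟩ := exists_open_nhds_one_mul_subset (Vnss_open.mem_nhds Vnss_one)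
    obtain ⟨W₂, hW₂o, hW₂1, hW₂⟩ := exists_open_nhds_one_mul_subset (hW₁o.mem_nhds hW₁1)
    set W : Set Circle := W₂ ∩ W₂⁻¹ with hWdef
    have hWo : IsOpen W := hW₂o.inter hW₂o.inv
    have hW1 : (1 : Circle) ∈ W := ⟨hW₂1, by simpa using hW₂1⟩
    have hW₂sub : W₂ ⊆ W₁ := fun a ha => by
      simpa using hW₂ (Set.mul_mem_mul ha hW₂1)
    have hWcomb : ∀ a b c : Circle, a ∈ W → b ∈ W → c ∈ W → a * (b⁻¹ * c) ∈ Vnss := by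
      intro a b c haW hbW hcW
      apply hW₁
      exact Set.mul_mem_mul (hW₂sub haW.1) (hW₂ (Set.mul_mem_mul hbW.2 hcW.1))
    -- U is a neighborhood of 1 in G
    set U : Set G := {x : G | ∀ χ ∈ K, χ x ∈ W} with hUdef
    have hU : U ∈ 𝓝 (1 : G) := by
      have hSopen : IsOpen {f : PontryaginDual (PontryaginDual G) |
          Set.MapsTo f K W} := by
        have := (ContinuousMap.isOpen_setOf_mapsTo hK hWo).preimage
          (ContinuousMonoidHom.isInducing_toContinuousMap (PontryaginDual G) Circle).continuous
        exact this
      have h1S : α (1 : G) ∈ {f : PontryaginDual (PontryaginDual G) | Set.MapsTo f K W} := by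
        intro χ _
        simp only [map_one]
        exact hW1
      have hpre := (href.continuous.tendsto (1 : G)) (hSopen.mem_nhds h1S)
      exact mem_of_superset hpre fun x hx χ hχ => hx hχ
    -- total boundedness gives finitely many centers
    obtain ⟨t, htfin, htcover⟩ := tb ((fun p : G × G => p.2 / p.1) ⁻¹' U)
      (by rw [huniv]; exact preimage_mem_comap hU)
    -- each point of K is isolated in K
    have key : ∀ χ₀ : PontryaginDual G, ∃ N : Set (PontryaginDual G),
        IsOpen N ∧ χ₀ ∈ N ∧ ∀ χ ∈ K, χ₀ ∈ K → χ ∈ N → χ = χ₀ := by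
      intro χ₀
      refine ⟨⋂ y ∈ t, (fun ψ : PontryaginDual G => ψ y / χ₀ y) ⁻¹' W, ?_, ?_, ?_⟩
      · exact htfin.isOpen_biInter fun y _ => (hWo.preimage ((heval y).div' continuous_const))
      · simp only [Set.mem_iInter, Set.mem_preimage]
        intro y _
        simpa using hW1
      · intro χ hχK hχ₀K hχN
        simp only [Set.mem_iInter, Set.mem_preimage] at hχN
        -- show χ x / χ₀ x ∈ Vnss for all x, and all its powers, hence equal
        have hall : ∀ x : G, χ x / χ₀ x ∈ Vnss := by
          intro x
          obtain ⟨y, hyt, hxy⟩ := by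
            have := htcover (Set.mem_univ x)
            simpa using this
          have hyU : y / x ∈ U := hxy
          have h1 : χ y / χ₀ y ∈ W := hχN y hyt
          have h2 : χ (y / x) ∈ W := hyU χ hχK
          have h3 : χ₀ (y / x) ∈ W := hyU χ₀ hχ₀K
          have hident : χ x / χ₀ x = (χ y / χ₀ y) * ((χ (y / x) : Circle)⁻¹ * (χ₀ (y / x))) := by
            rw [map_div, map_div]
            apply Subtype.ext
            push_cast
            field_simp
          rw [hident]
          exact hWcomb _ _ _ h1 h2 h3
        apply ContinuousMonoidHom.ext
        intro x
        have hz : ∀ n : ℕ, (1/2 : ℝ) < (((χ x / χ₀ x) ^ n : Circle) : ℂ).re := by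
          intro n
          have : (χ x / χ₀ x) ^ n = χ (x ^ n) / χ₀ (x ^ n) := by
            rw [map_pow, map_pow, div_pow]
          rw [this]
          exact hall (x ^ n)
        have := circle_nss hz
        exact div_eq_one.mp this
    choose N hNopen hNmem hNkey using key
    obtain ⟨u, hu⟩ := hK.elim_finite_subcover (fun χ : ↥K => N χ)
      (fun χ => hNopen χ) (fun χ hχ => Set.mem_iUnion.mpr ⟨⟨χ, hχ⟩, hNmem _⟩)
    refine Set.Finite.subset (u.finite_toSet.image Subtype.val) ?_
    intro χ hχ
    have humem := hu hχ
    rw [Set.mem_iUnion₂] at humem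
    obtain ⟨i, hiu, hiN⟩ := humem
    have : χ = (i : PontryaginDual G) := hNkey (↑i) χ hχ i.2 hiN
    exact ⟨i, hiu, this.symm⟩
  · -- compact subsets of the dual finite → totally bounded
    intro hfin d hd
    rw [huniv] at hd
    obtain ⟨M, hM, hMd⟩ := hd
    -- transfer M to a neighborhood of 1 in the bidual
    have hS : (⇑α) '' M ∈ 𝓝 (1 : PontryaginDual (PontryaginDual G)) := by
      have := href.isOpenMap.image_mem_nhds hM
      rwa [map_one] at this
    -- get a basic compact-open neighborhood inside the image
    obtain ⟨K, hKcomp, USet, hUopen, hU1, hbasic⟩ :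
        ∃ K : Set (PontryaginDual G), IsCompact K ∧ ∃ USet : Set Circle, IsOpen USet ∧
          (1 : Circle) ∈ USet ∧
          {f : PontryaginDual (PontryaginDual G) | Set.MapsTo f K USet} ⊆ (⇑α) '' M := by
      -- use the inducing map to C(·, Circle) and the compact-open basis
      have hind := ContinuousMonoidHom.isInducing_toContinuousMap (PontryaginDual G) Circle
      replace hS := (hind.nhds_eq_comap (1 : PontryaginDual (PontryaginDual G))).ge hS
      obtain ⟨S', hS', hS'sub⟩ := hS
      -- membership in the directed infimum of compact-open basic filters
      have hdir : S' ∈ ⨅ (p : {p : Set (PontryaginDual G) × Set Circle //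
          IsCompact p.1 ∧ IsOpen p.2 ∧ (1 : Circle) ∈ p.2}),
          𝓟 {g : C(PontryaginDual G, Circle) | Set.MapsTo g p.1.1 p.1.2} := by
        have hle : (⨅ (p : {p : Set (PontryaginDual G) × Set Circle //
            IsCompact p.1 ∧ IsOpen p.2 ∧ (1 : Circle) ∈ p.2}),
            𝓟 {g : C(PontryaginDual G, Circle) | Set.MapsTo g p.1.1 p.1.2}) ≤
            𝓝 (ContinuousMonoidHom.toContinuousMap
              (1 : PontryaginDual (PontryaginDual G))) := by
          rw [ContinuousMap.nhds_compactOpen]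
          refine le_iInf fun K => le_iInf fun hK => le_iInf fun V => le_iInf fun hV =>
            le_iInf fun hmt => ?_
          rcases K.eq_empty_or_nonempty with rfl | ⟨χ₀, hχ₀⟩
          · rw [le_principal_iff]
            have heq : {g : C(PontryaginDual G, Circle) | Set.MapsTo g (∅ : Set (PontryaginDual G)) V} = Set.univ :=
              Set.eq_univ_of_forall fun g => Set.mapsTo_empty _ _
            rw [heq]
            exact univ_mem
          · have h1V : (1 : Circle) ∈ V := by
              have := hmt hχ₀
              exact this
            exact iInf_le_of_le ⟨(K, V), hK, hV, h1V⟩ le_rfl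
        exact hle hS'
      have hne : Nonempty {p : Set (PontryaginDual G) × Set Circle //
          IsCompact p.1 ∧ IsOpen p.2 ∧ (1 : Circle) ∈ p.2} :=
        ⟨⟨(∅, Set.univ), isCompact_empty, isOpen_univ, Set.mem_univ _⟩⟩
      have hdirected : Directed (· ≥ ·) fun p : {p : Set (PontryaginDual G) × Set Circle //
          IsCompact p.1 ∧ IsOpen p.2 ∧ (1 : Circle) ∈ p.2} =>
          𝓟 {g : C(PontryaginDual G, Circle) | Set.MapsTo g p.1.1 p.1.2} := by
        rintro ⟨⟨K₁, U₁⟩, hK₁, hU₁, h1U₁⟩ ⟨⟨K₂, U₂⟩, hK₂, hU₂, h1U₂⟩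
        refine ⟨⟨(K₁ ∪ K₂, U₁ ∩ U₂), hK₁.union hK₂, hU₁.inter hU₂, h1U₁, h1U₂⟩, ?_, ?_⟩
        · exact principal_mono.mpr fun g hg => fun x hx => (hg (Set.mem_union_left _ hx)).1
        · exact principal_mono.mpr fun g hg => fun x hx => (hg (Set.mem_union_right _ hx)).2
      rw [mem_iInf_of_directed hdirected] at hdir
      obtain ⟨⟨⟨K, USet⟩, hKc, hUo, h1U⟩, hmem⟩ := hdir
      refine ⟨K, hKc, USet, hUo, h1U, ?_⟩
      intro f hf
      apply hS'sub
      exact hmem hf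
    have hKfin : K.Finite := hfin K hKcomp
    haveI : Finite ↥K := hKfin.to_subtype
    -- shrink USet
    obtain ⟨W, hWo, hW1, hWmul⟩ := exists_open_nhds_one_mul_subset (hUopen.mem_nhds hU1)
    set V' : Set Circle := W ∩ W⁻¹ with hV'def
    have hV'o : IsOpen V' := hWo.inter hWo.inv
    have hV'1 : (1 : Circle) ∈ V' := ⟨hW1, by simpa using hW1⟩
    -- the finite-dimensional torus
    set Φ : G → (↥K → Circle) := fun x χ => (χ : PontryaginDual G) x with hΦ
    set O : (↥K → Circle) → Set (↥K → Circle) :=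
      fun a => {b | ∀ χ : ↥K, b χ / a χ ∈ V'} with hO
    have hOopen : ∀ a, IsOpen (O a) := by
      intro a
      have : O a = ⋂ χ : ↥K, (fun b : ↥K → Circle => b χ / a χ) ⁻¹' V' := by
        ext b; simp [hO]
      rw [this]
      exact isOpen_iInter_of_finite fun χ =>
        hV'o.preimage ((continuous_apply χ).div' continuous_const)
    have hOcover : (Set.univ : Set (↥K → Circle)) ⊆ ⋃ a, O a := by
      intro b _
      exact Set.mem_iUnion.mpr ⟨b, fun χ => by simpa using hV'1⟩
    obtain ⟨T, hT⟩ := isCompact_univ.elim_finite_subcover O hOopen hOcover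
    -- choose centers
    classical
    set pick : (↥K → Circle) → G := fun a =>
      if h : ∃ x : G, Φ x ∈ O a then h.choose else 1 with hpick
    refine ⟨pick '' ↑T, (T.finite_toSet.image pick), ?_⟩
    intro x _
    obtain ⟨a, haT, hxa⟩ := by
      have := hT (Set.mem_univ (Φ x))
      simpa using this
    have hex : ∃ x' : G, Φ x' ∈ O a := ⟨x, hxa⟩
    set y : G := pick a with hy
    have hya : Φ y ∈ O a := by
      rw [hy, hpick]
      simp only [dif_pos hex]
      exact hex.choose_spec
    refine Set.mem_biUnion (Set.mem_image_of_mem pick haT) ?_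
    -- show (x, y) ∈ d
    apply hMd
    show y / x ∈ M
    -- y / x lies in the basic neighborhood, hence α (y/x) ∈ α '' M
    have hmem : α (y / x) ∈ (⇑α) '' M := by
      apply hbasic
      intro χ hχ
      have h1 : Φ y ⟨χ, hχ⟩ / a ⟨χ, hχ⟩ ∈ V' := hya ⟨χ, hχ⟩
      have h2 : Φ x ⟨χ, hχ⟩ / a ⟨χ, hχ⟩ ∈ V' := hxa ⟨χ, hχ⟩
      have : (α (y / x)) χ = (Φ y ⟨χ, hχ⟩ / a ⟨χ, hχ⟩) * (Φ x ⟨χ, hχ⟩ / a ⟨χ, hχ⟩)⁻¹ := by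
        show χ (y / x) = _
        rw [map_div]
        show χ y / χ x = _
        apply Subtype.ext
        push_cast
        field_simp
        exact mul_comm _ _
      rw [this]
      exact hWmul (Set.mul_mem_mul h1.1 (by simpa using h2.2))
    obtain ⟨m, hmM, hme⟩ := hmem
    have : m = y / x := href.injective hme
    rwa [this] at hmM

end
end

section
/- There exists a dense subgroup G of the compact product group ℤ(2)^𝔠 (the product of continuum many copies of the two-element group, with the product topology) such that G is pseudocompact and every countable subgroup of G is h-embedded in G. -/
open Topology Filter Set

noncomputable section

instance (n : ℕ) : TopologicalSpace (ZMod n) := ⊥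
instance (n : ℕ) : DiscreteTopology (ZMod n) := ⟨rfl⟩
instance (n : ℕ) : DiscreteTopology (Multiplicative (ZMod n)) := ⟨rfl⟩

instance (n : ℕ) : IsTopologicalGroup (Multiplicative (ZMod n)) where
  continuous_mul := continuous_of_discreteTopology
  continuous_inv := continuous_of_discreteTopology

namespace S12

def beta : ((ℕ → ZMod 2) ⊕ (ℕ → ZMod 2)) → Type
  | Sum.inl _ => PEmpty
  | Sum.inr _ => ℕ

abbrev Rt := WType beta

def node (s : ℕ → Rt) (ξ : ℕ → ZMod 2) : Rt := WType.mk (Sum.inr ξ) s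

def bse (ξ : ℕ → ZMod 2) : Rt := WType.mk (Sum.inl ξ) PEmpty.elim

def IsChild (a b : Rt) : Prop :=
  match b with
  | WType.mk (Sum.inr _) f => ∃ n, f n = a
  | WType.mk (Sum.inl _) _ => False

lemma asym : ∀ b a : Rt, IsChild a b → IsChild b a → False := by
  intro b
  induction b with
  | mk l f ih =>
    intro a h1 h2
    cases l with
    | inl ξ => exact h1
    | inr ξ =>
      obtain ⟨n, hn⟩ := h1
      subst hn
      exact ih n _ h2 ⟨n, rfl⟩

open Classical in
def ch : Rt → Rt → Option (ZMod 2)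
  | WType.mk (Sum.inr ξ) f, b => if h : ∃ n, f n = b then some (ξ (Nat.find h)) else none
  | WType.mk (Sum.inl _) _, _ => none

def M (a b : Rt) : ZMod 2 := (ch a b).getD ((ch b a).getD 0)

open Classical in
lemma ch_node (s : ℕ → Rt) (hs : Function.Injective s) (ξ : ℕ → ZMod 2) (n : ℕ) :
    ch (node s ξ) (s n) = some (ξ n) := by
  have h : ∃ m, s m = s n := ⟨n, rfl⟩
  have : Nat.find h = n := by
    have := Nat.find_spec h
    exact hs this
  simp only [node, ch, this]
  exact dif_pos h

lemma ch_parent_eq_none {a b : Rt} (hab : IsChild b a) : ch b a = none := by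
  classical
  rcases b with ⟨l, f⟩
  cases l with
  | inl ξ => rfl
  | inr ξ =>
    show ch (WType.mk (Sum.inr ξ) f) a = none
    rw [ch]
    rw [dif_neg]
    rintro ⟨n, hn⟩
    exact asym _ _ hab (hn ▸ ⟨n, rfl⟩ : IsChild a (WType.mk (Sum.inr ξ) f))

lemma M_node (s : ℕ → Rt) (hs : Function.Injective s) (ξ : ℕ → ZMod 2) (n : ℕ) :
    M (s n) (node s ξ) = ξ n ∧ M (node s ξ) (s n) = ξ n := by
  have hchild : IsChild (s n) (node s ξ) := ⟨n, rfl⟩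
  have h1 : ch (node s ξ) (s n) = some (ξ n) := ch_node s hs ξ n
  have h2 : ch (s n) (node s ξ) = none := ch_parent_eq_none hchild
  constructor
  · rw [M, h2, h1]; rfl
  · rw [M, h1]; rfl

/-! ### Cardinality -/

open Cardinal

lemma bse_inj : Function.Injective bse := by
  intro a b h
  injection h with h1 h2
  exact Sum.inl_injective h1

lemma mk_seq : #(ℕ → ZMod 2) = 𝔠 := by
  rw [← two_power_aleph0, Cardinal.mk_arrow]
  simp [Cardinal.mk_fintype]

lemma mk_Rt : #Rt = 𝔠 := by
  apply le_antisymm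
  · apply WType.cardinalMk_le_of_le (κ := 𝔠)
    have h1 : (Cardinal.sum fun a : (ℕ → ZMod 2) ⊕ (ℕ → ZMod 2) => (𝔠 : Cardinal) ^ #(beta a)) ≤
        Cardinal.sum fun _ : (ℕ → ZMod 2) ⊕ (ℕ → ZMod 2) => (𝔠 : Cardinal) := by
      apply Cardinal.sum_le_sum
      intro a
      cases a with
      | inl ξ =>
        simp only [beta, Cardinal.mk_eq_zero, Cardinal.power_zero]
        exact Cardinal.one_le_iff_ne_zero.mpr continuum_ne_zero
      | inr ξ => rw [beta, Cardinal.mk_nat, continuum_power_aleph0]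
    refine h1.trans ?_
    rw [Cardinal.sum_const', Cardinal.mk_sum, mk_seq, Cardinal.lift_id]
    rw [show (𝔠 + 𝔠 : Cardinal) = 𝔠 from Cardinal.add_eq_self aleph0_le_continuum]
    exact le_of_eq (Cardinal.mul_eq_self aleph0_le_continuum)
  · rw [← mk_seq]
    exact Cardinal.mk_le_of_injective bse_inj

def eRt : ℝ ≃ Rt := Classical.choice (Cardinal.eq.mp (by rw [Cardinal.mk_real, mk_Rt]))

lemma nat_bse_inj : Function.Injective (fun n : ℕ => bse (fun m => if m = n then 1 else 0)) := by
  intro a b h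
  have := congrFun (bse_inj h) a
  simp at this
  by_contra hne
  exact hne this

lemma cover {A : Set Rt} (hA : A.Countable) :
    ∃ s : ℕ → Rt, Function.Injective s ∧ A ⊆ Set.range s := by
  set B := A ∪ Set.range (fun n : ℕ => bse (fun m => if m = n then 1 else 0)) with hB
  have hBc : B.Countable := hA.union (Set.countable_range _)
  have hBi : B.Infinite := by
    apply Set.infinite_of_injective_forall_mem nat_bse_inj
    intro n; exact Or.inr ⟨n, rfl⟩
  obtain ⟨d⟩ := Set.countable_infinite_iff_nonempty_denumerable.mp ⟨hBc, hBi⟩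
  haveI := d
  let q : ℕ ≃ B := (Denumerable.eqv B).symm
  refine ⟨fun n => (q n : Rt), ?_, ?_⟩
  · intro a b h
    exact q.injective (Subtype.ext h)
  · intro a ha
    exact ⟨q.symm ⟨a, Or.inl ha⟩, by simp⟩

/-! ### The group -/

abbrev MZ := Multiplicative (ZMod 2)
abbrev PiG := ℝ → MZ

def colfun (c : Rt) : PiG := fun r => Multiplicative.ofAdd (M (eRt r) c)

def Gs : Subgroup PiG := Subgroup.closure (Set.range colfun)

/-- countable pattern realization -/
lemma realize (T : Set ℝ) (hT : T.Countable) (p : PiG) :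
    ∃ g ∈ Gs, ∀ t ∈ T, g t = p t := by
  obtain ⟨s, hsinj, hscov⟩ := cover ((hT.image eRt))
  set ξ : ℕ → ZMod 2 := fun n => Multiplicative.toAdd (p (eRt.symm (s n))) with hξ
  refine ⟨colfun (node s ξ), Subgroup.subset_closure ⟨node s ξ, rfl⟩, ?_⟩
  intro t ht
  obtain ⟨n, hn⟩ := hscov ⟨t, ht, rfl⟩
  have : M (eRt t) (node s ξ) = ξ n := by
    rw [← hn]; exact (M_node s hsinj ξ n).1
  rw [colfun, this, hξ]
  simp only [hn]
  simp

lemma dense_Gs : Dense (Gs : Set PiG) := by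
  intro x
  rw [mem_closure_iff_nhds]
  intro U hU
  rw [nhds_pi] at hU
  obtain ⟨I, t, ht, hsub⟩ := Filter.mem_pi'.mp hU
  obtain ⟨g, hg, hmatch⟩ := realize ↑I I.countable_toSet x
  refine ⟨g, hsub ?_, hg⟩
  intro i hi
  rw [hmatch i hi]
  exact mem_of_mem_nhds (ht i)


/-! ### Pseudocompactness -/

lemma cont_finset (f : ↥Gs → ℝ) (hf : Continuous f) (w : ↥Gs) :
    ∃ F : Finset ℝ, ∀ u : ↥Gs, (∀ r ∈ F, (u : PiG) r = (w : PiG) r) → |f u - f w| < 1 := by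
  have h1 : f ⁻¹' Metric.ball (f w) 1 ∈ 𝓝 w :=
    hf.continuousAt.preimage_mem_nhds (Metric.ball_mem_nhds _ one_pos)
  obtain ⟨x, hx⟩ := w
  rw [nhds_subtype_eq_comap] at h1
  obtain ⟨U, hU, hUsub⟩ := Filter.mem_comap.mp h1
  rw [nhds_pi] at hU
  obtain ⟨I, t, ht, hsub⟩ := Filter.mem_pi'.mp hU
  refine ⟨I, fun u hu => ?_⟩
  have hmem : (u : PiG) ∈ Set.pi ↑I t := by
    intro i hi
    rw [hu i hi]
    exact mem_of_mem_nhds (ht i)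
  have : u ∈ f ⁻¹' Metric.ball (f ⟨x, hx⟩) 1 := hUsub (by exact hsub hmem)
  rw [Set.mem_preimage, Metric.mem_ball, Real.dist_eq] at this
  exact this

lemma pseudocompact_Gs : IsPseudocompact ↥Gs := by
  classical
  intro f hf
  by_contra hb
  have hn : ∀ n : ℕ, ∃ x : ↥Gs, (n : ℝ) < |f x| := by
    intro n
    by_contra h
    push_neg at h
    apply hb
    rw [isBounded_iff_forall_norm_le]
    refine ⟨n, ?_⟩
    rintro y ⟨x, rfl⟩
    simpa [Real.norm_eq_abs] using h x
  choose z hz using hn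
  choose F hF using fun n => cont_finset f hf (z n)
  set S : Set ℝ := ⋃ n, ((F n : Finset ℝ) : Set ℝ) with hS
  have hSc : S.Countable := countable_iUnion fun n => (F n).countable_toSet
  let U : Ultrafilter ℕ := Ultrafilter.of Filter.cofinite
  have hUle : (U : Filter ℕ) ≤ Filter.cofinite := Ultrafilter.of_le _
  set w0 : PiG := fun r => if {n | (z n : PiG) r = 1} ∈ U then 1 else Multiplicative.ofAdd 1
    with hw0
  have hkey : ∀ r, {n | (z n : PiG) r = w0 r} ∈ U := by
    intro r
    by_cases h : {n | (z n : PiG) r = 1} ∈ U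
    · have : w0 r = 1 := by rw [hw0]; simp only [if_pos h]
      rw [this]; exact h
    · have hw : w0 r = Multiplicative.ofAdd 1 := by rw [hw0]; simp only [if_neg h]
      rw [hw]
      refine mem_of_superset ((Ultrafilter.compl_mem_iff_notMem).mpr h) ?_
      intro n hn
      have : (z n : PiG) r = 1 ∨ (z n : PiG) r = Multiplicative.ofAdd 1 := by
        have : ∀ v : MZ, v = 1 ∨ v = Multiplicative.ofAdd 1 := by decide
        exact this _
      rcases this with h1 | h1
      · exact absurd h1 hn
      · exact h1
  obtain ⟨d, hdG, hd⟩ := realize S hSc w0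
  set dG : ↥Gs := ⟨d, hdG⟩ with hdGdef
  obtain ⟨F0, hF0⟩ := cont_finset f hf dG
  set k : ℕ := ⌈|f dG|⌉₊ + 3 with hk
  have hQ : {n | ∀ r ∈ F0, r ∈ S → (z n : PiG) r = w0 r} ∈ U := by
    have h1 : (⋂ r ∈ F0, {n | r ∈ S → (z n : PiG) r = w0 r}) ∈ U := by
      apply (Filter.biInter_finset_mem _).mpr
      intro r _
      by_cases hrS : r ∈ S
      · exact mem_of_superset (hkey r) (fun n hn _ => hn)
      · exact mem_of_superset Filter.univ_mem (fun n _ hrS' => absurd hrS' hrS)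
    refine mem_of_superset h1 ?_
    intro n hn r hr hrS
    exact Set.mem_iInter₂.mp hn r hr hrS
  have hK : {n | k ≤ n} ∈ U := by
    apply hUle
    rw [Filter.mem_cofinite]
    have : {n : ℕ | k ≤ n}ᶜ = {n | n < k} := by ext n; simp [not_le]
    rw [this]
    exact Set.finite_lt_nat k
  obtain ⟨n, hnQ, hnk⟩ := Ultrafilter.nonempty_of_mem (Filter.inter_mem hQ hK)
  set q : PiG := fun r => if r ∈ F0 then d r else (z n : PiG) r with hq
  obtain ⟨y, hyG, hy⟩ := realize (↑F0 ∪ S) (F0.countable_toSet.union hSc) q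
  set yG : ↥Gs := ⟨y, hyG⟩ with hyGdef
  have h1 : |f yG - f dG| < 1 := by
    apply hF0
    intro r hr
    show y r = d r
    rw [hy r (Or.inl hr)]
    simp only [hq, if_pos hr]
  have h2 : |f yG - f (z n)| < 1 := by
    apply hF n
    intro r hr
    have hrS : r ∈ S := Set.mem_iUnion.mpr ⟨n, hr⟩
    show y r = (z n : PiG) r
    rw [hy r (Or.inr hrS)]
    by_cases hrF : r ∈ F0
    · simp only [hq, if_pos hrF]
      have hdr : d r = w0 r := hd r hrS
      have hzr : (z n : PiG) r = w0 r := hnQ r hrF hrS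
      rw [hdr, hzr]
    · simp only [hq, if_neg hrF]
  have hzn : (n : ℝ) < |f (z n)| := hz n
  have hkn : (k : ℝ) ≤ (n : ℝ) := Nat.cast_le.mpr hnk
  have hck : |f dG| + 3 ≤ (k : ℝ) := by
    rw [hk]
    push_cast
    have := Nat.le_ceil |f dG|
    linarith
  have : |f (z n)| ≤ |f dG| + 2 := by
    have e1 : |f yG| ≤ |f dG| + 1 := by
      have := abs_sub_abs_le_abs_sub (f yG) (f dG)
      linarith
    have h2' : |f (z n) - f yG| < 1 := by rwa [abs_sub_comm] at h2
    have := abs_sub_abs_le_abs_sub (f (z n)) (f yG)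
    linarith
  linarith

/-! ### h-embedding -/

lemma mz_sq' : ∀ a : MZ, a * a = 1 := by decide
lemma mz_sq (a : MZ) : a * a = 1 := mz_sq' a

lemma sq_eq_one (x : PiG) : x * x = 1 := by
  funext r
  exact mz_sq (x r)

open scoped symmDiff in
open Classical in
lemma sum_symmDiff' (A B : Finset Rt) (v : Rt → ZMod 2) :
    ∑ c ∈ symmDiff A B, v c = (∑ c ∈ A, v c) + ∑ c ∈ B, v c := by
  have hA : (∑ c ∈ A \ B, v c) + ∑ c ∈ A ∩ B, v c = ∑ c ∈ A, v c := by
    rw [← Finset.sdiff_inter_self_left A B]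
    exact Finset.sum_sdiff Finset.inter_subset_left
  have hB : (∑ c ∈ B \ A, v c) + ∑ c ∈ B ∩ A, v c = ∑ c ∈ B, v c := by
    rw [← Finset.sdiff_inter_self_left B A]
    exact Finset.sum_sdiff Finset.inter_subset_left
  have hsym : ∑ c ∈ symmDiff A B, v c = (∑ c ∈ A \ B, v c) + ∑ c ∈ B \ A, v c := by
    rw [symmDiff_def, Finset.sup_eq_union]
    exact Finset.sum_union disjoint_sdiff_sdiff
  have hcomm : A ∩ B = B ∩ A := Finset.inter_comm A B
  have h2 : ∀ x : ZMod 2, x + x = 0 := by decide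
  rw [hsym, ← hA, ← hB, hcomm]
  have h3 := h2 (∑ c ∈ B ∩ A, v c)
  linear_combination -h3

def Rep (w : PiG) (A : Finset Rt) : Prop :=
  ∀ r, w r = Multiplicative.ofAdd (∑ c ∈ A, M (eRt r) c)

lemma rep_exists {w : PiG} (hw : w ∈ Gs) : ∃ A, Rep w A := by
  induction hw using Subgroup.closure_induction with
  | mem x hx =>
    obtain ⟨c, rfl⟩ := hx
    exact ⟨{c}, fun r => by simp [colfun]⟩
  | one => exact ⟨∅, fun r => by simp⟩
  | mul x y hx hy ihx ihy =>
    obtain ⟨A, hA⟩ := ihx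
    obtain ⟨B, hB⟩ := ihy
    classical
    refine ⟨symmDiff A B, fun r => ?_⟩
    rw [Pi.mul_apply, hA r, hB r, sum_symmDiff', ofAdd_add]
  | inv x hx ihx =>
    obtain ⟨A, hA⟩ := ihx
    refine ⟨A, fun r => ?_⟩
    rw [Pi.inv_apply, hA r]
    exact inv_eq_of_mul_eq_one_left (mz_sq _)

def neg1 : Circle := ⟨-1, by simp [Submonoid.unitSphere]⟩

lemma neg1_ne_one : neg1 ≠ 1 := by
  intro h
  have := congrArg (fun z : Circle => (z : ℂ)) h
  simp only [neg1, Circle.coe_one] at this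
  norm_num at this

lemma circle_sq {z : Circle} (hz : z * z = 1) : z = 1 ∨ z = neg1 := by
  have h : (z : ℂ) * (z : ℂ) = 1 := by
    have := congrArg (fun w : Circle => (w : ℂ)) hz
    simpa using this
  have h2 : ((z : ℂ) - 1) * ((z : ℂ) + 1) = 0 := by ring_nf; linear_combination h
  rcases mul_eq_zero.mp h2 with h3 | h3
  · left
    apply Circle.ext
    rw [Circle.coe_one]
    exact sub_eq_zero.mp h3
  · right
    apply Circle.ext
    show (z : ℂ) = ((-1 : ℂ))
    exact eq_neg_of_add_eq_zero_left h3

open Classical in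
def iota : MZ →* Circle where
  toFun x := if x = 1 then 1 else neg1
  map_one' := if_pos rfl
  map_mul' := by
    have hcases : ∀ v : MZ, v = 1 ∨ v = Multiplicative.ofAdd 1 := by decide
    have hmul : (Multiplicative.ofAdd (1 : ZMod 2)) * Multiplicative.ofAdd 1 = 1 := by decide
    have hne : (Multiplicative.ofAdd (1 : ZMod 2)) ≠ 1 := by decide
    have hneg : (1 : Circle) = neg1 * neg1 := by
      apply Circle.ext
      show (1 : ℂ) = (-1) * (-1)
      norm_num
    intro a b
    rcases hcases a with ha | ha <;> rcases hcases b with hb | hb <;> subst ha <;> subst hb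
    · simp
    · simp
    · simp
    · show (if (Multiplicative.ofAdd (1 : ZMod 2) * Multiplicative.ofAdd 1 : MZ) = 1
            then (1 : Circle) else neg1)
          = (if (Multiplicative.ofAdd (1 : ZMod 2) : MZ) = 1 then (1 : Circle) else neg1) *
            (if (Multiplicative.ofAdd (1 : ZMod 2) : MZ) = 1 then (1 : Circle) else neg1)
      rw [hmul, if_pos rfl, if_neg hne]
      exact hneg

lemma hEmb (H : Subgroup ↥Gs) (hH : ((H : Set ↥Gs)).Countable) : IsHEmbedded H := by
  intro φ
  haveI : Countable ↥H := hH.to_subtype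
  classical
  -- representations
  have hrep : ∀ x : ↥H, ∃ A : Finset Rt, Rep (((x : ↥Gs) : PiG)) A :=
    fun x => rep_exists (x : ↥Gs).2
  choose A hA using hrep
  -- the φ-values are ±1
  have hxsq : ∀ x : ↥H, x * x = 1 := by
    intro x
    apply Subtype.ext; apply Subtype.ext
    exact sq_eq_one ((x : ↥Gs) : PiG)
  have hφpm : ∀ x : ↥H, φ x = 1 ∨ φ x = neg1 := by
    intro x
    apply circle_sq
    rw [← map_mul, hxsq x, map_one]
  set h' : ↥H → ZMod 2 := fun x => if φ x = 1 then 0 else 1 with hh'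
  have hφη : ∀ x : ↥H, φ x = iota (Multiplicative.ofAdd (h' x)) := by
    intro x
    rcases hφpm x with h | h
    · have h0 : h' x = 0 := by rw [hh']; simp [h]
      rw [h0, h]
      show (1 : Circle) = iota 1
      rw [map_one]
    · have h0 : h' x = 1 := by
        rw [hh']
        simp only [h]
        rw [if_neg neg1_ne_one]
      rw [h0, h]
      have hne : (Multiplicative.ofAdd (1 : ZMod 2)) ≠ 1 := by decide
      show neg1 = iota (Multiplicative.ofAdd 1)
      simp [iota, hne]
  -- linear algebra
  set χ : ↥H → (Rt →₀ ZMod 2) := fun x => ∑ c ∈ A x, Finsupp.single c 1 with hχ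
  set T : (↥H →₀ ZMod 2) →ₗ[ZMod 2] (Rt →₀ ZMod 2) :=
    Finsupp.linearCombination (ZMod 2) χ with hT
  set E : (↥H →₀ ZMod 2) →ₗ[ZMod 2] ZMod 2 :=
    Finsupp.linearCombination (ZMod 2) h' with hE
  have hone : ∀ v : ZMod 2, v ≠ 0 → v = 1 := by decide
  have hχapp : ∀ (x : ↥H) (c : Rt), χ x c = if c ∈ A x then 1 else 0 := by
    intro x c
    rw [hχ]
    rw [Finsupp.finset_sum_apply]
    rw [Finset.sum_congr rfl (fun c' _ => Finsupp.single_apply (a := c') (b := (1 : ZMod 2)))]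
    exact Finset.sum_ite_eq' (A x) c (fun _ => (1 : ZMod 2))
  have hker : LinearMap.ker T ≤ LinearMap.ker E := by
    intro m hm
    rw [LinearMap.mem_ker] at hm ⊢
    -- the corresponding product of functions is 1
    have hTc : ∀ c : Rt, (∑ x ∈ m.support, if c ∈ A x then (1 : ZMod 2) else 0) = 0 := by
      intro c
      have : (T m) c = 0 := by rw [hm]; rfl
      rw [hT, Finsupp.linearCombination_apply, Finsupp.sum] at this
      rw [Finsupp.finset_sum_apply] at this
      calc (∑ x ∈ m.support, if c ∈ A x then (1 : ZMod 2) else 0)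
          = ∑ x ∈ m.support, m x • (χ x) c := by
            apply Finset.sum_congr rfl
            intro x hx
            rw [hχapp, hone (m x) (Finsupp.mem_support_iff.mp hx), one_smul]
        _ = ∑ x ∈ m.support, (m x • χ x) c := by
            apply Finset.sum_congr rfl
            intro x _
            rw [Finsupp.smul_apply]
        _ = 0 := this
    have hP : (∏ x ∈ m.support, ((x : ↥Gs) : PiG)) = 1 := by
      funext r
      rw [Finset.prod_apply]
      have : ∀ x ∈ m.support, ((x : ↥Gs) : PiG) r
          = Multiplicative.ofAdd (∑ c ∈ A x, M (eRt r) c) := fun x _ => hA x r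
      rw [Finset.prod_congr rfl this, ← ofAdd_sum]
      set UU := m.support.biUnion A with hUU
      have hswap : ∑ x ∈ m.support, ∑ c ∈ A x, M (eRt r) c
          = ∑ c ∈ UU, ∑ x ∈ m.support, (if c ∈ A x then (1 : ZMod 2) else 0) * M (eRt r) c := by
        rw [Finset.sum_comm]
        apply Finset.sum_congr rfl
        intro x hx
        simp only [ite_mul, one_mul, zero_mul]
        rw [← Finset.sum_filter]
        have : UU.filter (fun c => c ∈ A x) = A x := by
          apply Finset.Subset.antisymm
          · intro c hc; exact (Finset.mem_filter.mp hc).2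
          · intro c hc
            exact Finset.mem_filter.mpr ⟨Finset.mem_biUnion.mpr ⟨x, hx, hc⟩, hc⟩
        rw [this]
      rw [hswap]
      have : ∀ c ∈ UU, (∑ x ∈ m.support, (if c ∈ A x then (1 : ZMod 2) else 0) * M (eRt r) c)
          = 0 := by
        intro c _
        rw [← Finset.sum_mul, hTc c, zero_mul]
      rw [Finset.sum_congr rfl this, Finset.sum_const, smul_zero]
      rfl
    -- hence the product in H is 1, and φ of it is 1
    set j : ↥H →* PiG := (Gs.subtype).comp H.subtype with hj
    have hjinj : Function.Injective j := by
      intro a b hab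
      exact Subtype.ext (Subtype.ext hab)
    have hP1 : (∏ x ∈ m.support, x) = (1 : ↥H) := by
      apply hjinj
      rw [map_prod, map_one]
      exact hP
    have hφ1 : (∏ x ∈ m.support, φ x) = 1 := by
      rw [← map_prod, hP1, map_one]
    have hsum : Multiplicative.ofAdd (∑ x ∈ m.support, h' x) = (1 : MZ) := by
      by_contra hne
      have h1 : (∑ x ∈ m.support, h' x) = 1 := by
        apply hone
        intro h0
        apply hne
        rw [h0]
        rfl
      have : (∏ x ∈ m.support, φ x) = neg1 := by
        calc (∏ x ∈ m.support, φ x) = ∏ x ∈ m.support, iota (Multiplicative.ofAdd (h' x)) :=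
              Finset.prod_congr rfl (fun x _ => hφη x)
          _ = iota (Multiplicative.ofAdd (∑ x ∈ m.support, h' x)) := by
              rw [ofAdd_sum, map_prod]
          _ = neg1 := by
              rw [h1]
              have : (Multiplicative.ofAdd (1 : ZMod 2)) ≠ 1 := by decide
              simp [iota, this]
      exact neg1_ne_one (this ▸ hφ1)
    have hsum0 : (∑ x ∈ m.support, h' x) = 0 := by
      have := congrArg Multiplicative.toAdd hsum
      simpa using this
    rw [hE, Finsupp.linearCombination_apply, Finsupp.sum]
    calc (∑ x ∈ m.support, m x • h' x) = ∑ x ∈ m.support, h' x := by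
          apply Finset.sum_congr rfl
          intro x hx
          rw [hone (m x) (Finsupp.mem_support_iff.mp hx), one_smul]
      _ = 0 := hsum0
  -- extend the functional
  set Ebar := Submodule.liftQ (LinearMap.ker T) E hker with hEbar
  set eqv := T.quotKerEquivRange with heqv
  set θ : (LinearMap.range T) →ₗ[ZMod 2] ZMod 2 := Ebar.comp (eqv.symm.toLinearMap) with hθ
  obtain ⟨ηhat, hηhat⟩ := LinearMap.exists_extend θ
  have hfactor : ∀ mm : (↥H →₀ ZMod 2), ηhat (T mm) = E mm := by
    intro mm
    have h1 : (⟨T mm, LinearMap.mem_range_self T mm⟩ : LinearMap.range T)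
        = eqv (Submodule.Quotient.mk mm) := by
      apply Subtype.ext
      rw [heqv]
      exact (LinearMap.quotKerEquivRange_apply_mk T mm).symm
    have h2 : ηhat (T mm) = θ ⟨T mm, LinearMap.mem_range_self T mm⟩ := by
      have := LinearMap.congr_fun hηhat ⟨T mm, LinearMap.mem_range_self T mm⟩
      exact this.symm ▸ this
    rw [h2, h1, hθ]
    simp only [LinearMap.comp_apply, LinearEquiv.coe_toLinearMap]
    rw [LinearEquiv.symm_apply_apply]
    rw [hEbar]
    exact Submodule.liftQ_apply _ E mm
  set η : Rt → ZMod 2 := fun c => ηhat (Finsupp.single c 1) with hη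
  have key2 : ∀ x : ↥H, (∑ c ∈ A x, η c) = h' x := by
    intro x
    have h1 : (∑ c ∈ A x, η c) = ηhat (χ x) := by
      rw [hχ, map_sum]
    have h2 : χ x = T (Finsupp.single x 1) := by
      rw [hT, Finsupp.linearCombination_single, one_smul]
    rw [h1, h2, hfactor, hE, Finsupp.linearCombination_single, one_smul]
  -- find the coordinate
  set Aset : Set Rt := ⋃ x : ↥H, ((A x : Finset Rt) : Set Rt) with hAset
  have hAc : Aset.Countable := Set.countable_iUnion (fun x => (A x).countable_toSet)
  obtain ⟨s, hsinj, hscov⟩ := cover hAc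
  set rr : Rt := node s (fun n => η (s n)) with hrr
  set r : ℝ := eRt.symm rr with hr
  have hMη : ∀ c ∈ Aset, M rr c = η c := by
    intro c hc
    obtain ⟨n, hn⟩ := hscov hc
    rw [← hn, hrr]
    exact (M_node s hsinj _ n).2
  refine ⟨iota.comp ((Pi.evalMonoidHom (fun _ : ℝ => MZ) r).comp Gs.subtype), ?_, ?_⟩
  · have hco : (⇑(iota.comp ((Pi.evalMonoidHom (fun _ : ℝ => MZ) r).comp Gs.subtype)))
        = (fun x : ↥Gs => iota ((x : PiG) r)) := rfl
    rw [hco]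
    exact continuous_of_discreteTopology.comp ((continuous_apply r).comp continuous_subtype_val)
  · intro x
    show iota (((x : ↥Gs) : PiG) r) = φ x
    rw [hA x r]
    have her : eRt r = rr := by rw [hr]; exact eRt.apply_symm_apply rr
    have : (∑ c ∈ A x, M (eRt r) c) = ∑ c ∈ A x, η c := by
      apply Finset.sum_congr rfl
      intro c hc
      rw [her]
      exact hMη c (Set.mem_iUnion.mpr ⟨x, hc⟩)
    rw [this, key2, ← hφη]

end S12

/-- There exists a dense subgroup `G` of the compact product group `ℤ(2)^𝔠`
(formalized as the product of `ℝ`-many, i.e. continuum many, copies of the two-element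
group with the product topology) such that `G` is pseudocompact and every countable
subgroup of `G` is h-embedded in `G`. -/


theorem statement12 :
    ∃ G : Subgroup (ℝ → Multiplicative (ZMod 2)),
      Dense (G : Set (ℝ → Multiplicative (ZMod 2))) ∧
      IsPseudocompact G ∧
      ∀ H : Subgroup G, (H : Set G).Countable → IsHEmbedded H := by
  exact ⟨S12.Gs, S12.dense_Gs, S12.pseudocompact_Gs, fun H hH => S12.hEmb H hH⟩

end
end

section
/- Let I be an uncountable index set, let n ≥ 2 be a natural number, and let Σ = {x ∈ ℤ(n)^I : the support {i ∈ I : x(i) ≠ 0} is countable} be the Σ-product, a dense subgroup of the compact product group ℤ(n)^I. Then the evaluation map α_Σ : Σ → Σ^∧∧ is continuous but not surjective; in particular, Σ is an ω-bounded (hence countably compact) noncompact group that is not reflexive. -/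
open Topology Filter Set

noncomputable section

/-- The Σ-product `Σ = {x ∈ ℤ(n)^I : supp(x) is countable}`, a subgroup of the product
group `ℤ(n)^I`. -/
def SigmaProd (I : Type*) (n : ℕ) : Subgroup (I → Multiplicative (ZMod n)) where
  carrier := {x | {i | x i ≠ 1}.Countable}
  one_mem' := by
    have h : {i : I | (1 : I → Multiplicative (ZMod n)) i ≠ 1} = (∅ : Set I) := by
      ext i; simp
    show {i : I | (1 : I → Multiplicative (ZMod n)) i ≠ 1}.Countable
    rw [h]; exact Set.countable_empty
  mul_mem' {x y} hx hy := by
    refine Set.Countable.mono ?_ (hx.union hy)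
    intro i hi
    by_contra hmem
    simp only [Set.mem_union, Set.mem_setOf_eq, not_or, not_not] at hmem
    exact hi (by simp only [Set.mem_setOf_eq, not_not, Pi.mul_apply, hmem.1, hmem.2, mul_one])
  inv_mem' {x} hx := by
    refine Set.Countable.mono ?_ hx
    intro i hi
    simp only [Set.mem_setOf_eq, Pi.inv_apply, ne_eq, inv_eq_one] at hi ⊢
    exact hi

namespace Stmt17

open scoped Classical

lemma zpow_n (n : ℕ) (z : Multiplicative (ZMod n)) : z ^ n = 1 := by
  have h : Multiplicative.toAdd (z ^ n) = Multiplicative.toAdd (1 : Multiplicative (ZMod n)) := by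
    rw [toAdd_pow, toAdd_one, nsmul_eq_mul]
    simp
  exact Multiplicative.toAdd.injective h

lemma single_mem (I : Type) (n : ℕ) (i : I) (a : Multiplicative (ZMod n)) :
    Pi.mulSingle i a ∈ SigmaProd I n := by
  show {j | (Pi.mulSingle i a : I → Multiplicative (ZMod n)) j ≠ 1}.Countable
  refine Set.Countable.mono ?_ (Set.countable_singleton i)
  intro j hj
  simp only [Set.mem_setOf_eq] at hj
  by_contra h
  exact hj (show (Pi.mulSingle i a : I → Multiplicative (ZMod n)) j = 1 from
    Pi.mulSingle_eq_of_ne (M := fun _ : I => Multiplicative (ZMod n)) (by simpa using h) a)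

/-- The element of the Σ-product supported at a single coordinate. -/
def sEl (I : Type) (n : ℕ) (i : I) (a : Multiplicative (ZMod n)) : SigmaProd I n :=
  ⟨Pi.mulSingle i a, single_mem I n i a⟩

lemma spow_n {I : Type} {n : ℕ} (x : SigmaProd I n) : x ^ n = 1 := by
  apply Subtype.ext
  show ((x : I → Multiplicative (ZMod n)) ^ n) = 1
  funext j
  exact zpow_n n _

lemma char_pow {I : Type} {n : ℕ} (χ : PontryaginDual (SigmaProd I n)) (x : SigmaProd I n) :
    χ x ^ n = 1 := by
  rw [← map_pow, spow_n, map_one]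

lemma exists_good_nhd (n : ℕ) (hn : 2 ≤ n) :
    ∃ V : Set Circle, IsOpen V ∧ 1 ∈ V ∧ ∀ z ∈ V, z ^ n = 1 → z = 1 := by
  have hfin : ({z : Circle | z ^ n = 1}).Finite := by
    have h1 : ({w : ℂ | w ^ n = 1}).Finite := by
      have hs : {w : ℂ | w ^ n = 1} ⊆ ↑(Polynomial.nthRoots n (1 : ℂ)).toFinset := by
        intro w hw
        rw [Finset.mem_coe, Multiset.mem_toFinset, Polynomial.mem_nthRoots (by omega : 0 < n)]
        exact hw
      exact Set.Finite.subset (Polynomial.nthRoots n (1 : ℂ)).toFinset.finite_toSet hs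
    have hsub : {z : Circle | z ^ n = 1} ⊆ Subtype.val ⁻¹' {w : ℂ | w ^ n = 1} := by
      intro z hz
      show ((z : ℂ)) ^ n = 1
      show (Circle.coeHom z) ^ n = 1
      rw [← map_pow, hz, map_one]
    exact (h1.preimage Subtype.val_injective.injOn).subset hsub
  refine ⟨{z : Circle | z ^ n = 1 ∧ z ≠ 1}ᶜ, ?_, ?_, ?_⟩
  · rw [isOpen_compl_iff]
    exact Set.Finite.isClosed ((hfin.subset (fun z hz => hz.1)))
  · intro h
    exact h.2 rfl
  · intro z hz hzn
    by_contra h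
    exact hz ⟨hzn, h⟩

lemma char_locally_trivial {I : Type} {n : ℕ} (hn : 2 ≤ n)
    (χ : PontryaginDual (SigmaProd I n)) :
    ∃ F : Finset I, ∀ x : SigmaProd I n,
      (∀ j ∈ F, (x : I → Multiplicative (ZMod n)) j = 1) → χ x = 1 := by
  obtain ⟨V, hVo, hV1, hVspec⟩ := exists_good_nhd n hn
  have hnhd : (⇑χ) ⁻¹' V ∈ 𝓝 (1 : SigmaProd I n) :=
    (map_continuous χ).continuousAt.preimage_mem_nhds (hVo.mem_nhds (by rwa [map_one]))
  obtain ⟨u, hu, hsub⟩ := mem_nhds_subtype _ _ _ |>.mp hnhd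
  obtain ⟨W, hWu, hWo, hW1⟩ := mem_nhds_iff.mp hu
  obtain ⟨F, U, hFU, hpi⟩ := isOpen_pi_iff.mp hWo _ hW1
  refine ⟨F, fun x hx => ?_⟩
  have hmem : (x : I → Multiplicative (ZMod n)) ∈ Set.pi ↑F U := by
    intro j hj
    rw [Finset.mem_coe] at hj
    rw [hx j hj]
    exact (hFU j hj).2
  have : x ∈ (⇑χ) ⁻¹' V := hsub (hWu (hpi hmem))
  exact hVspec _ this (char_pow χ x)

lemma char_finsupp_trivial {I : Type} {n : ℕ} (χ : PontryaginDual (SigmaProd I n))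
    (hχ : ∀ (i : I) (a : Multiplicative (ZMod n)), χ (sEl I n i a) = 1) (G : Finset I) :
    ∀ x : SigmaProd I n, (∀ j ∉ G, (x : I → Multiplicative (ZMod n)) j = 1) → χ x = 1 := by
  induction G using Finset.induction_on with
  | empty =>
    intro x hx
    have hx1 : x = 1 := Subtype.ext (funext fun j => hx j (Finset.notMem_empty j))
    rw [hx1, map_one]
  | @insert i G hiG ih =>
    intro x hx
    set y : SigmaProd I n := sEl I n i ((x : I → Multiplicative (ZMod n)) i) with hy
    have hx' : ∀ j ∉ G, ((x * y⁻¹ : SigmaProd I n) : I → Multiplicative (ZMod n)) j = 1 := by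
      intro j hj
      by_cases hji : j = i
      · subst hji
        show (x : I → Multiplicative (ZMod n)) j *
          ((Pi.mulSingle j ((x : I → Multiplicative (ZMod n)) j) : I → Multiplicative (ZMod n)) j)⁻¹ = 1
        rw [Pi.mulSingle_eq_same (M := fun _ : I => Multiplicative (ZMod n)), mul_inv_cancel]
      · show (x : I → Multiplicative (ZMod n)) j *
          ((Pi.mulSingle i ((x : I → Multiplicative (ZMod n)) i) : I → Multiplicative (ZMod n)) j)⁻¹ = 1
        rw [Pi.mulSingle_eq_of_ne (M := fun _ : I => Multiplicative (ZMod n)) hji, inv_one, mul_one]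
        exact hx j (by simp [Finset.mem_insert, hji, hj])
    have h1 : χ (x * y⁻¹) = 1 := ih _ hx'
    have h2 : χ y = 1 := hχ i _
    calc χ x = χ ((x * y⁻¹) * y) := by rw [inv_mul_cancel_right]
      _ = 1 := by rw [map_mul, h1, h2, mul_one]


lemma single_mem_C {I : Type} {n : ℕ} (i : I) (a : Multiplicative (ZMod n)) (j k : I)
    (hjk : j ≠ k) :
    (Pi.mulSingle i a : I → Multiplicative (ZMod n)) j = 1 ∨
      (Pi.mulSingle i a : I → Multiplicative (ZMod n)) k = 1 := by
  by_cases hji : j = i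
  · refine Or.inr (Pi.mulSingle_eq_of_ne (M := fun _ : I => Multiplicative (ZMod n)) ?_ a)
    intro h
    exact hjk (hji.trans h.symm)
  · exact Or.inl (Pi.mulSingle_eq_of_ne (M := fun _ : I => Multiplicative (ZMod n)) hji a)

lemma dual_discrete (I : Type) (n : ℕ) (hn : 2 ≤ n) :
    DiscreteTopology (PontryaginDual (SigmaProd I n)) := by
  haveI : NeZero n := ⟨by omega⟩
  apply discreteTopology_of_isOpen_singleton_one
  obtain ⟨V, hVo, hV1, hVspec⟩ := exists_good_nhd n hn
  set C : Set (I → Multiplicative (ZMod n)) :=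
    ⋂ (j : I) (k : I) (_ : j ≠ k), ({x | x j = 1} ∪ {x | x k = 1}) with hC
  have hCclosed : IsClosed C := by
    refine isClosed_iInter fun j => isClosed_iInter fun k => isClosed_iInter fun _ => ?_
    exact (isClosed_singleton.preimage (continuous_apply j)).union
      (isClosed_singleton.preimage (continuous_apply k))
  have hCcomp : IsCompact C := hCclosed.isCompact
  have hCsub : C ⊆ Set.range (Subtype.val : SigmaProd I n → (I → Multiplicative (ZMod n))) := by
    intro x hx
    simp only [hC, Set.mem_iInter] at hx
    have hss : {i | x i ≠ 1}.Subsingleton := by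
      intro j hj k hk
      by_contra hjk
      rcases hx j k hjk with h | h
      · exact hj h
      · exact hk h
    exact ⟨⟨x, hss.countable⟩, rfl⟩
  have hCpre : IsCompact (Subtype.val ⁻¹' C : Set (SigmaProd I n)) :=
    Topology.IsInducing.subtypeVal.isCompact_preimage' hCcomp hCsub
  have hNopen : IsOpen {χ : PontryaginDual (SigmaProd I n) |
      Set.MapsTo ⇑χ (Subtype.val ⁻¹' C) V} := by
    have h2 := ContinuousMap.isOpen_setOf_mapsTo hCpre hVo
    exact h2.preimage (ContinuousMonoidHom.isInducing_toContinuousMap _ _).continuous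
  have hkey : {χ : PontryaginDual (SigmaProd I n) | Set.MapsTo ⇑χ (Subtype.val ⁻¹' C) V}
      = {1} := by
    apply Set.eq_singleton_iff_unique_mem.mpr
    constructor
    · intro x _
      show (1 : PontryaginDual (SigmaProd I n)) x ∈ V
      simpa using hV1
    · intro χ hχ
      have hsingle : ∀ (i : I) (a : Multiplicative (ZMod n)), χ (sEl I n i a) = 1 := by
        intro i a
        have hmemC : ((sEl I n i a : SigmaProd I n) : I → Multiplicative (ZMod n)) ∈ C := by
          simp only [hC, Set.mem_iInter]
          intro j k hjk
          exact single_mem_C i a j k hjk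
        exact hVspec _ (hχ hmemC) (char_pow χ _)
      obtain ⟨F, hF⟩ := char_locally_trivial hn χ
      refine ContinuousMonoidHom.ext fun x => ?_
      show χ x = 1
      have hmemoff : (fun j => if j ∈ F then 1 else (x : I → Multiplicative (ZMod n)) j)
          ∈ SigmaProd I n := by
        show {j | _ ≠ 1}.Countable
        refine Set.Countable.mono ?_ x.2
        intro j hj
        simp only [Set.mem_setOf_eq] at hj ⊢
        by_cases h : j ∈ F
        · simp [h] at hj
        · simpa [h] using hj
      set xoff : SigmaProd I n := ⟨_, hmemoff⟩ with hxoff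
      have h2 : χ xoff = 1 := by
        refine hF xoff fun j hj => ?_
        show (if j ∈ F then 1 else (x : I → Multiplicative (ZMod n)) j) = 1
        simp [hj]
      have h1 : χ (x * xoff⁻¹) = 1 := by
        refine char_finsupp_trivial χ hsingle F (x * xoff⁻¹) fun j hj => ?_
        show (x : I → Multiplicative (ZMod n)) j *
          ((if j ∈ F then 1 else (x : I → Multiplicative (ZMod n)) j))⁻¹ = 1
        simp [hj]
      calc χ x = χ ((x * xoff⁻¹) * xoff) := by rw [inv_mul_cancel_right]
        _ = 1 := by rw [map_mul, h1, h2, mul_one]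
  rw [← hkey]
  exact hNopen

lemma char_single_support {I : Type} {n : ℕ} (hn : 2 ≤ n)
    (χ : PontryaginDual (SigmaProd I n)) (a : Multiplicative (ZMod n)) :
    (Function.mulSupport fun i => χ (sEl I n i a)).Finite := by
  obtain ⟨F, hF⟩ := char_locally_trivial hn χ
  refine Set.Finite.subset F.finite_toSet fun i hi => ?_
  rw [Function.mem_mulSupport] at hi
  rw [Finset.mem_coe]
  by_contra h
  refine hi (hF _ fun j hj => ?_)
  show (Pi.mulSingle i a : I → Multiplicative (ZMod n)) j = 1
  refine Pi.mulSingle_eq_of_ne (M := fun _ : I => Multiplicative (ZMod n)) ?_ a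
  intro hji
  exact h (hji ▸ hj)

lemma dense_sigmaProd (I : Type) (n : ℕ) :
    Dense (SigmaProd I n : Set (I → Multiplicative (ZMod n))) := by
  intro x
  rw [mem_closure_iff]
  intro o ho hxo
  obtain ⟨F, U, hFU, hsub⟩ := isOpen_pi_iff.mp ho x hxo
  refine ⟨fun i => if i ∈ F then x i else 1, hsub ?_, ?_⟩
  · intro j hj
    rw [Finset.mem_coe] at hj
    simp only [hj, if_true]
    exact (hFU j hj).2
  · show (fun i => if i ∈ F then x i else 1) ∈ SigmaProd I n
    show {j | _ ≠ 1}.Countable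
    refine Set.Countable.mono ?_ F.countable_toSet
    intro j hj
    simp only [Set.mem_setOf_eq] at hj
    rw [Finset.mem_coe]
    by_contra h
    simp [h] at hj

end Stmt17
/-- For an uncountable index set `I` and `n ≥ 2`, the Σ-product
`Σ ⊆ ℤ(n)^I` is a dense subgroup of `ℤ(n)^I`, its evaluation map `α_Σ` is continuous but
not surjective; in particular `Σ` is ω-bounded (the closure of every countable subset is
compact), hence countably compact, noncompact, and not reflexive. -/
theorem statement17 (I : Type) (hI : ¬(Set.univ : Set I).Countable) (n : ℕ) (hn : 2 ≤ n) :
    Dense (SigmaProd I n : Set (I → Multiplicative (ZMod n))) ∧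
    Continuous ⇑(pontrEval (SigmaProd I n)) ∧
    ¬Function.Surjective ⇑(pontrEval (SigmaProd I n)) ∧
    (∀ S : Set (SigmaProd I n), S.Countable → IsCompact (closure S)) ∧
    ¬CompactSpace (SigmaProd I n) ∧
    ¬IsHomeomorph ⇑(pontrEval (SigmaProd I n)) := by
  classical
  haveI : NeZero n := ⟨by omega⟩
  haveI : Fact (1 < n) := ⟨hn⟩
  haveI hdisc := Stmt17.dual_discrete I n hn
  have hdense := Stmt17.dense_sigmaProd I n
  -- continuity
  have hcont : Continuous ⇑(pontrEval (SigmaProd I n)) := by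
    refine (ContinuousMonoidHom.isInducing_toContinuousMap _ _).continuous_iff.mpr ?_
    apply ContinuousMap.continuous_of_continuous_uncurry
    have key : Continuous fun p : SigmaProd I n × PontryaginDual (SigmaProd I n) =>
        p.2 p.1 := by
      rw [continuous_def]
      intro O hO
      have heq : (fun p : SigmaProd I n × PontryaginDual (SigmaProd I n) => p.2 p.1) ⁻¹' O
          = ⋃ χ : PontryaginDual (SigmaProd I n), ((⇑χ) ⁻¹' O) ×ˢ ({χ} : Set _) := by
        ext ⟨x, χ⟩
        simp only [Set.mem_preimage, Set.mem_iUnion, Set.mem_prod, Set.mem_singleton_iff]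
        constructor
        · intro h
          exact ⟨χ, h, rfl⟩
        · rintro ⟨ψ, h1, rfl⟩
          exact h1
      rw [heq]
      exact isOpen_iUnion fun ψ => (hO.preimage (map_continuous ψ)).prod (isOpen_discrete _)
    exact key
  -- non-surjectivity
  have hnonsurj : ¬Function.Surjective ⇑(pontrEval (SigmaProd I n)) := by
    intro hsurj
    set g : Multiplicative (ZMod n) := Multiplicative.ofAdd 1 with hg
    let Φ : PontryaginDual (PontryaginDual (SigmaProd I n)) :=
      { toFun := fun χ => ∏ᶠ i, χ (Stmt17.sEl I n i g)
        map_one' := by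
          show (∏ᶠ i : I, (1 : PontryaginDual (SigmaProd I n)) (Stmt17.sEl I n i g)) = 1
          have h1 : ∀ i : I, (1 : PontryaginDual (SigmaProd I n)) (Stmt17.sEl I n i g) = 1 :=
            fun i => rfl
          simp only [h1]
          exact finprod_one
        map_mul' := fun χ ψ => by
          have h1 : ∀ i : I, (χ * ψ) (Stmt17.sEl I n i g)
              = χ (Stmt17.sEl I n i g) * ψ (Stmt17.sEl I n i g) := fun i => rfl
          simp only [h1]
          exact finprod_mul_distrib (Stmt17.char_single_support hn χ g)
            (Stmt17.char_single_support hn ψ g)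
        continuous_toFun := continuous_of_discreteTopology }
    obtain ⟨x, hx⟩ := hsurj Φ
    have hne : {i | (x : I → Multiplicative (ZMod n)) i ≠ 1} ≠ Set.univ := by
      intro h
      exact hI (h ▸ x.2)
    obtain ⟨i0, hi0⟩ : ∃ i0, (x : I → Multiplicative (ZMod n)) i0 = 1 := by
      by_contra h
      push_neg at h
      exact hne (Set.eq_univ_of_forall h)
    let χ0 : PontryaginDual (SigmaProd I n) :=
      { toFun := fun y =>
          ZMod.toCircle (Multiplicative.toAdd ((y : I → Multiplicative (ZMod n)) i0))
        map_one' := by simpa using ZMod.toCircle.map_zero_eq_one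
        map_mul' := fun y z => by
          have h : Multiplicative.toAdd (((y * z : SigmaProd I n) :
                I → Multiplicative (ZMod n)) i0)
              = Multiplicative.toAdd ((y : I → Multiplicative (ZMod n)) i0)
                + Multiplicative.toAdd ((z : I → Multiplicative (ZMod n)) i0) := rfl
          show ZMod.toCircle (Multiplicative.toAdd
              (((y * z : SigmaProd I n) : I → Multiplicative (ZMod n)) i0))
            = ZMod.toCircle (Multiplicative.toAdd ((y : I → Multiplicative (ZMod n)) i0))
              * ZMod.toCircle (Multiplicative.toAdd ((z : I → Multiplicative (ZMod n)) i0))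
          rw [h, AddChar.map_add_eq_mul]
        continuous_toFun := by
          have h1 : Continuous fun y : SigmaProd I n =>
              (y : I → Multiplicative (ZMod n)) i0 :=
            (continuous_apply i0).comp continuous_subtype_val
          exact (continuous_of_discreteTopology
            (f := fun z : Multiplicative (ZMod n) => ZMod.toCircle (Multiplicative.toAdd z))).comp h1 }
    have heval := DFunLike.congr_fun hx χ0
    have hL : (pontrEval (SigmaProd I n) x) χ0 = χ0 x := rfl
    have hχ0x : χ0 x = 1 := by
      show ZMod.toCircle (Multiplicative.toAdd ((x : I → Multiplicative (ZMod n)) i0)) = 1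
      rw [hi0]
      simpa using ZMod.toCircle.map_zero_eq_one
    have hΦ : Φ χ0 = ZMod.toCircle (1 : ZMod n) := by
      show (∏ᶠ i, χ0 (Stmt17.sEl I n i g)) = _
      have h2 : ∀ i, i ≠ i0 → χ0 (Stmt17.sEl I n i g) = 1 := by
        intro i hi
        show ZMod.toCircle (Multiplicative.toAdd
          ((Pi.mulSingle i g : I → Multiplicative (ZMod n)) i0)) = 1
        rw [Pi.mulSingle_eq_of_ne (M := fun _ : I => Multiplicative (ZMod n)) (Ne.symm hi) g]
        simpa using ZMod.toCircle.map_zero_eq_one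
      rw [finprod_eq_single _ i0 h2]
      show ZMod.toCircle (Multiplicative.toAdd
        ((Pi.mulSingle i0 g : I → Multiplicative (ZMod n)) i0)) = _
      rw [Pi.mulSingle_eq_same (M := fun _ : I => Multiplicative (ZMod n))]
      rfl
    have hne1 : ZMod.toCircle (1 : ZMod n) ≠ 1 := by
      intro h
      have h0 : ZMod.toCircle (0 : ZMod n) = 1 := by
        simpa using ZMod.toCircle.map_zero_eq_one
      exact one_ne_zero (ZMod.injective_toCircle (h.trans h0.symm))
    rw [hL, hχ0x] at heval
    exact hne1 (hΦ.symm.trans heval.symm)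
  refine ⟨hdense, hcont, hnonsurj, ?_, ?_, ?_⟩
  · -- ω-bounded
    intro S hS
    set A : Set I := ⋃ x ∈ S, {i | (x : I → Multiplicative (ZMod n)) i ≠ 1} with hA
    have hAc : A.Countable := hS.biUnion fun x _ => x.2
    set T : Set (I → Multiplicative (ZMod n)) := {y | ∀ i ∉ A, y i = 1} with hT
    have hTclosed : IsClosed T := by
      have heq : T = ⋂ (i : I) (_ : i ∉ A), {y : I → Multiplicative (ZMod n) | y i = 1} := by
        ext y
        simp [hT, Set.mem_iInter]
      rw [heq]
      exact isClosed_iInter fun i => isClosed_iInter fun _ =>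
        isClosed_singleton.preimage (continuous_apply i)
    have hTcomp : IsCompact T := hTclosed.isCompact
    have hTsub : T ⊆ Set.range (Subtype.val : SigmaProd I n → (I → Multiplicative (ZMod n))) := by
      intro y hy
      refine ⟨⟨y, ?_⟩, rfl⟩
      show {i | y i ≠ 1}.Countable
      refine Set.Countable.mono ?_ hAc
      intro i hi
      by_contra h
      exact hi (hy i h)
    have hpre : IsCompact (Subtype.val ⁻¹' T : Set (SigmaProd I n)) :=
      Topology.IsInducing.subtypeVal.isCompact_preimage' hTcomp hTsub
    refine hpre.of_isClosed_subset isClosed_closure (closure_minimal ?_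
      (hTclosed.preimage continuous_subtype_val))
    intro x hxS
    intro i hiA
    by_contra h
    exact hiA (Set.mem_biUnion hxS h)
  · -- noncompact
    intro hc
    have h1 : IsCompact (Set.range (Subtype.val : SigmaProd I n → (I → Multiplicative (ZMod n)))) :=
      isCompact_range continuous_subtype_val
    have h2 : IsClosed (SigmaProd I n : Set (I → Multiplicative (ZMod n))) := by
      have := h1.isClosed
      rwa [Subtype.range_coe] at this
    have h4 : (SigmaProd I n : Set (I → Multiplicative (ZMod n))) = Set.univ := by
      rw [← h2.closure_eq]
      exact hdense.closure_eq
    have h5 : (fun _ : I => Multiplicative.ofAdd (1 : ZMod n)) ∈ SigmaProd I n := by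
      rw [← SetLike.mem_coe, h4]
      trivial
    have h6 : {i : I | (fun _ : I => Multiplicative.ofAdd (1 : ZMod n)) i ≠ 1} = Set.univ := by
      apply Set.eq_univ_of_forall
      intro i
      show Multiplicative.ofAdd (1 : ZMod n) ≠ 1
      intro h
      have : (1 : ZMod n) = 0 := Multiplicative.ofAdd.injective (by simpa using h)
      exact one_ne_zero this
    apply hI
    rw [← h6]
    exact h5
  · intro h
    exact hnonsurj h.bijective.surjective

end
end
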